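/- arXiv:0709.2360 — 5 statements merged into one kernel-verified Lean document; each statement's English description precedes it below -/
import Mathlib

section
/- (Necessity part of Bernstein's theorem.) Let f(z) = Σ_{m=0}^∞ a_m z^m be a power series with complex coefficients and radius of convergence 1, and let Δ ∈ [0,1). If f has an immediate analytic continuation from the open unit disc to the arc I_Δ = {e^{iθ} : |θ| ≤ πΔ}, then there exist α > 0, a number b < 1 − Δ, and a function F holomorphic in the angle A(α) = {z ∈ ℂ : z ≠ 0, |arg z| < α} such that a_m = (−1)^m F(m) for every positive integer m, and limsup_{t→+∞} (log|F(t e^{iθ})|)/t ≤ πb|sin θ| for every θ with |θ| < α. -/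
open Filter MeasureTheory Set Topology

noncomputable section

/-- The sum of the power series `∑ a_m z^m`. -/
def powerSum (a : ℕ → ℂ) (z : ℂ) : ℂ := ∑' m, a m * z ^ m

/-- The power series `∑ a_m z^m` has radius of convergence 1:
`limsup |a_m|^{1/m} = 1`. -/
def RadiusOne (a : ℕ → ℂ) : Prop :=
  Filter.limsup (fun m : ℕ => ‖a m‖ ^ (1 / (m : ℝ))) Filter.atTop = 1

/-- Immediate analytic continuation of the power series `∑ a_m z^m` from the
open unit disc to the set `J`: an open set `U` containing the open unit disc
and `J`, and a holomorphic `g` on `U` agreeing with the sum on the disc. -/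
def ContinuesTo (a : ℕ → ℂ) (J : Set ℂ) : Prop :=
  ∃ U : Set ℂ, IsOpen U ∧ Metric.ball (0 : ℂ) 1 ⊆ U ∧ J ⊆ U ∧
    ∃ g : ℂ → ℂ, DifferentiableOn ℂ g U ∧
      ∀ z ∈ Metric.ball (0 : ℂ) 1, g z = powerSum a z

/-- The closed arc `I_Δ = {e^{iθ} : |θ| ≤ πΔ}`. -/
def arcI (D : ℝ) : Set ℂ :=
  {w : ℂ | ∃ θ : ℝ, |θ| ≤ Real.pi * D ∧ w = Complex.exp (θ * Complex.I)}

/-- A sign change of the real sequence `b` occurs at place `m`: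
`b m * b k < 0` for some `k < m` while `b j = 0` for `k < j < m`. -/
def SignChangeAt (b : ℕ → ℝ) (m : ℕ) : Prop :=
  ∃ k < m, b m * b k < 0 ∧ ∀ j, k < j → j < m → b j = 0

/-- The real sequence `j ↦ Re (e^{-iβ} a_j)`. -/
def rotRe (a : ℕ → ℂ) (β : ℝ) (j : ℕ) : ℝ :=
  (Complex.exp (-(β : ℂ) * Complex.I) * a j).re

/-- `n_{k,+}(r) = (1/m) card (Λ_{k,+} ∩ [m, (1+r)m])`, where `Λ_{k,+}` is the set of
integers in `[m, 2m]` where sign changes of `j ↦ Re (e^{-iβ} a_j)` occur. -/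
def nPlus (a : ℕ → ℂ) (β : ℝ) (m : ℕ) (r : ℝ) : ℝ :=
  (Set.ncard {j : ℕ | m ≤ j ∧ j ≤ 2 * m ∧ SignChangeAt (rotRe a β) j ∧
      (j : ℝ) ≤ (1 + r) * (m : ℝ)} : ℝ) / (m : ℝ)

/-- `n_{k,-}(r) = (1/m) card (Λ_{k,-} ∩ [(1-r)m, m])`, where `Λ_{k,-}` is the set of
integers in `[0, m]` where sign changes of `j ↦ Re (e^{-iβ} a_j)` occur. -/
def nMinus (a : ℕ → ℂ) (β : ℝ) (m : ℕ) (r : ℝ) : ℝ :=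
  (Set.ncard {j : ℕ | j ≤ m ∧ SignChangeAt (rotRe a β) j ∧
      (1 - r) * (m : ℝ) ≤ (j : ℝ)} : ℝ) / (m : ℝ)

/-- The gap analogue of `nPlus`: count nonzero coefficients instead of sign changes. -/
def nPlusGap (a : ℕ → ℂ) (m : ℕ) (r : ℝ) : ℝ :=
  (Set.ncard {j : ℕ | m ≤ j ∧ j ≤ 2 * m ∧ a j ≠ 0 ∧
      (j : ℝ) ≤ (1 + r) * (m : ℝ)} : ℝ) / (m : ℝ)

/-- The gap analogue of `nMinus`: count nonzero coefficients instead of sign changes. -/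
def nMinusGap (a : ℕ → ℂ) (m : ℕ) (r : ℝ) : ℝ :=
  (Set.ncard {j : ℕ | j ≤ m ∧ a j ≠ 0 ∧ (1 - r) * (m : ℝ) ≤ (j : ℝ)} : ℝ) / (m : ℝ)

/-- The lower `Δ`-regularization of `n` on the set `s`: the (pointwise) supremum of
all `C¹` minorants `φ` of `n` on `s` with `Δ ≤ φ' ≤ 1` on `s`. -/
def lowerRegOn (n : ℝ → ℝ) (D : ℝ) (s : Set ℝ) (x : ℝ) : ℝ :=
  sSup {y : ℝ | ∃ φ : ℝ → ℝ, ContDiffOn ℝ 1 φ s ∧ (∀ t ∈ s, φ t ≤ n t) ∧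
    (∀ t ∈ s, D ≤ derivWithin φ s t ∧ derivWithin φ s t ≤ 1) ∧ y = φ x}

/-- The lower `Δ`-regularization on the interval `[0, δ]`. -/
def lowerReg (n : ℝ → ℝ) (D δ : ℝ) : ℝ → ℝ := lowerRegOn n D (Set.Icc 0 δ)

/-- The upper `a`-regularization of `n` on the set `s`: the (pointwise) infimum of
all `C¹` majorants `φ` of `n` on `s` with `0 ≤ φ' ≤ a` on `s`. -/
def upperRegOn (n : ℝ → ℝ) (a : ℝ) (s : Set ℝ) (x : ℝ) : ℝ :=
  sInf {y : ℝ | ∃ φ : ℝ → ℝ, ContDiffOn ℝ 1 φ s ∧ (∀ t ∈ s, n t ≤ φ t) ∧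
    (∀ t ∈ s, 0 ≤ derivWithin φ s t ∧ derivWithin φ s t ≤ a) ∧ y = φ x}

/-- The upper `a`-regularization on the interval `[0, δ]`. -/
def upperReg (n : ℝ → ℝ) (a δ : ℝ) : ℝ → ℝ := upperRegOn n a (Set.Icc 0 δ)

/-- A (real-valued) function `u` is subharmonic on `s` if it is upper semicontinuous
on `s` and satisfies the sub-mean value inequality on all sufficiently small circles. -/
def SubharmonicOn (u : ℂ → ℝ) (s : Set ℂ) : Prop :=
  UpperSemicontinuousOn u s ∧
  ∀ z ∈ s, ∃ ε > 0, ∀ ρ : ℝ, 0 < ρ → ρ < ε →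
    u z ≤ (2 * Real.pi)⁻¹ *
      ∫ θ in (0 : ℝ)..2 * Real.pi, u (z + (ρ : ℂ) * Complex.exp ((θ : ℂ) * Complex.I))

/-- The Laplacian of a function `φ : ℂ → ℝ`, as the sum of the two second
partial derivatives (in the directions `1` and `I`). -/
def lap (φ : ℂ → ℝ) (z : ℂ) : ℝ :=
  fderiv ℝ (fun w => fderiv ℝ φ w 1) z 1 +
    fderiv ℝ (fun w => fderiv ℝ φ w Complex.I) z Complex.I

/-- `μ` is the Riesz measure of `u` on the open set `s`, i.e. `μ` is `(1/2π)` times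
the distributional Laplacian of `u`: for every smooth test function `φ` compactly
supported in `s`, `∫ u·Δφ = 2π ∫ φ dμ`. -/
def IsRieszMeasureOn (u : ℂ → ℝ) (s : Set ℂ) (μ : Measure ℂ) : Prop :=
  ∀ φ : ℂ → ℝ, ContDiff ℝ (⊤ : ℕ∞) φ → HasCompactSupport φ → tsupport φ ⊆ s →
    ∫ z, u z * lap φ z = 2 * Real.pi * ∫ z, φ z ∂μ

/-- The counting function `n(r, Λ) = card {λ ∈ Λ : λ ≤ r}` of a set of integers. -/
def countFun (Λ : Set ℕ) (r : ℝ) : ℝ := (Set.ncard {l : ℕ | l ∈ Λ ∧ (l : ℝ) ≤ r} : ℝ)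

/-- The maximum (Pólya) density
`D₂(Λ) = lim_{r→0+} limsup_{t→∞} (n((1+r)t, Λ) - n(t, Λ))/(rt)`
(the outer limit always exists, so it may be written as a `limsup`). -/
def maxDensity (Λ : Set ℕ) : ℝ :=
  Filter.limsup (fun r : ℝ =>
    Filter.limsup (fun t : ℝ => (countFun Λ ((1 + r) * t) - countFun Λ t) / (r * t))
      Filter.atTop) (𝓝[>] (0 : ℝ))

/-- The number of sign changes of the finite sequence `(a_0, …, a_N)`. -/
def signChangesUpTo (a : ℕ → ℝ) (N : ℕ) : ℕ :=
  Set.ncard {m : ℕ | m ≤ N ∧ SignChangeAt a m}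

/-- The order of vanishing of `f` at `x`: the least `k` with `f^{(k)}(x) ≠ 0`. -/
def vanishOrder (f : ℝ → ℝ) (x : ℝ) : ℕ :=
  sInf {k : ℕ | iteratedDeriv k f x ≠ 0}


/-! ### Auxiliary machinery for the proof of Bernstein necessity -/

namespace BernNec

open Complex intervalIntegral

/-- The integral kernel `g(e^s)·e^s·e^{-(z+1)(s-iπ)}`. -/
def Hker (g : ℂ → ℂ) (z s : ℂ) : ℂ :=
  g (Complex.exp s) * Complex.exp s * Complex.exp (-(z + 1) * (s - Real.pi * Complex.I))

lemma Hker_split (g : ℂ → ℂ) (z s : ℂ) :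
    Hker g z s = (g (Complex.exp s) * Complex.exp s *
      Complex.exp (-(s - Real.pi * Complex.I))) *
      Complex.exp (z * -(s - Real.pi * Complex.I)) := by
  rw [Hker, show -(z + 1) * (s - Real.pi * Complex.I)
        = -(s - Real.pi * Complex.I) + z * -(s - Real.pi * Complex.I) by ring,
      Complex.exp_add]
  ring

lemma Hker_norm (g : ℂ → ℂ) (z s : ℂ) :
    ‖Hker g z s‖ = ‖g (Complex.exp s)‖ *
      Real.exp (-(z.re * s.re) + z.im * (s.im - Real.pi)) := by
  rw [Hker, norm_mul, norm_mul,
    Complex.norm_exp, Complex.norm_exp, mul_assoc,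
    ← Real.exp_add]
  congr 2
  simp [Complex.mul_re, Complex.add_re, Complex.sub_re, Complex.sub_im, Complex.neg_re,
    Complex.neg_im, Complex.add_im, Complex.mul_im]
  ring

lemma Hker_contOn {U : Set ℂ} {g : ℂ → ℂ} (hg : DifferentiableOn ℂ g U)
    (z : ℂ) : ContinuousOn (Hker g z) {s | Complex.exp s ∈ U} := by
  have h1 : ContinuousOn (fun s => g (Complex.exp s)) {s | Complex.exp s ∈ U} :=
    hg.continuousOn.comp Complex.continuous_exp.continuousOn fun s hs => hs
  exact (h1.mul Complex.continuous_exp.continuousOn).mul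
    ((Complex.continuous_exp.comp (by fun_prop)).continuousOn)

/-- Vertical segment integral. -/
def VertB (g : ℂ → ℂ) (x a b : ℝ) (z : ℂ) : ℂ :=
  Complex.I • ∫ ψ in a..b, Hker g z (x + ψ * Complex.I)

/-- Horizontal segment integral. -/
def HorizB (g : ℂ → ℂ) (ψ a b : ℝ) (z : ℂ) : ℂ :=
  ∫ x in a..b, Hker g z (x + ψ * Complex.I)

/-- The bulge contour integral. -/
def PB (g : ℂ → ℂ) (β ℓR ℓ : ℝ) (z : ℂ) : ℂ :=
  VertB g ℓR 0 β z - HorizB g β ℓ ℓR z + VertB g ℓ β (2 * Real.pi - β) z +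
    HorizB g (2 * Real.pi - β) ℓ ℓR z + VertB g ℓR (2 * Real.pi - β) (2 * Real.pi) z

lemma rect_eq {U : Set ℂ} {g : ℂ → ℂ} (hg : DifferentiableOn ℂ g U)
    (z : ℂ) (x₁ x₂ ψ₁ ψ₂ : ℝ)
    (hsub : ∀ s : ℂ, s.re ∈ Set.uIcc x₁ x₂ → s.im ∈ Set.uIcc ψ₁ ψ₂ → Complex.exp s ∈ U) :
    HorizB g ψ₁ x₁ x₂ z - HorizB g ψ₂ x₁ x₂ z + VertB g x₂ ψ₁ ψ₂ z - VertB g x₁ ψ₁ ψ₂ z = 0 := by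
  have hdiff : DifferentiableOn ℂ (Hker g z) {s | Complex.exp s ∈ U} := by
    have h1 : DifferentiableOn ℂ (fun s => g (Complex.exp s)) {s | Complex.exp s ∈ U} :=
      hg.comp Complex.differentiable_exp.differentiableOn fun s hs => hs
    exact (h1.mul Complex.differentiable_exp.differentiableOn).mul
      (((Complex.differentiable_exp.comp
        (((differentiable_id).sub_const _).const_mul _))).differentiableOn)
  have h := Complex.integral_boundary_rect_eq_zero_of_differentiableOn (Hker g z)
    ((x₁ : ℂ) + (ψ₁ : ℂ) * Complex.I) ((x₂ : ℂ) + (ψ₂ : ℂ) * Complex.I) ?_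
  · simp only [Complex.add_re, Complex.ofReal_re, Complex.mul_re, Complex.I_re,
      Complex.ofReal_im, Complex.I_im, Complex.add_im, Complex.mul_im] at h
    norm_num at h
    simpa [HorizB, VertB] using h
  · refine hdiff.mono fun s hs => ?_
    rw [Complex.mem_reProdIm] at hs
    refine hsub s ?_ ?_
    · simpa using hs.1
    · simpa using hs.2

lemma vert_contOn {U : Set ℂ} {g : ℂ → ℂ} (hg : DifferentiableOn ℂ g U)
    (z : ℂ) (x a b : ℝ)
    (hsub : ∀ ψ ∈ Set.uIcc a b, Complex.exp ((x : ℂ) + ψ * Complex.I) ∈ U) :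
    ContinuousOn (fun ψ : ℝ => Hker g z ((x : ℂ) + ψ * Complex.I)) (Set.uIcc a b) :=
  (Hker_contOn hg z).comp (by fun_prop) fun ψ hψ => hsub ψ hψ

lemma horiz_contOn {U : Set ℂ} {g : ℂ → ℂ} (hg : DifferentiableOn ℂ g U)
    (z : ℂ) (ψ a b : ℝ)
    (hsub : ∀ x ∈ Set.uIcc a b, Complex.exp ((x : ℂ) + ψ * Complex.I) ∈ U) :
    ContinuousOn (fun x : ℝ => Hker g z ((x : ℂ) + ψ * Complex.I)) (Set.uIcc a b) :=
  (Hker_contOn hg z).comp (by fun_prop) fun x hx => hsub x hx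

lemma vert_add {U : Set ℂ} {g : ℂ → ℂ} (hg : DifferentiableOn ℂ g U)
    (z : ℂ) (x a b c : ℝ)
    (h1 : ∀ ψ ∈ Set.uIcc a b, Complex.exp ((x : ℂ) + ψ * Complex.I) ∈ U)
    (h2 : ∀ ψ ∈ Set.uIcc b c, Complex.exp ((x : ℂ) + ψ * Complex.I) ∈ U) :
    VertB g x a b z + VertB g x b c z = VertB g x a c z := by
  rw [VertB, VertB, VertB, ← smul_add]
  congr 1
  exact intervalIntegral.integral_add_adjacent_intervals
    ((vert_contOn hg z x a b h1).intervalIntegrable)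
    ((vert_contOn hg z x b c h2).intervalIntegrable)

lemma horiz_add {U : Set ℂ} {g : ℂ → ℂ} (hg : DifferentiableOn ℂ g U)
    (z : ℂ) (ψ a b c : ℝ)
    (h1 : ∀ x ∈ Set.uIcc a b, Complex.exp ((x : ℂ) + ψ * Complex.I) ∈ U)
    (h2 : ∀ x ∈ Set.uIcc b c, Complex.exp ((x : ℂ) + ψ * Complex.I) ∈ U) :
    HorizB g ψ a b z + HorizB g ψ b c z = HorizB g ψ a c z :=
  intervalIntegral.integral_add_adjacent_intervals
    ((horiz_contOn hg z ψ a b h1).intervalIntegrable)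
    ((horiz_contOn hg z ψ b c h2).intervalIntegrable)

/-- Differentiability in the parameter of `∫ K t * exp (z * d t)`. -/
lemma diff_param {K d : ℝ → ℂ} {a b : ℝ} (hK : ContinuousOn K (Set.uIcc a b))
    (hd : ContinuousOn d (Set.uIcc a b)) :
    Differentiable ℂ fun z : ℂ => ∫ t in a..b, K t * Complex.exp (z * d t) := by
  intro z₀
  have hcont : ∀ z : ℂ, ContinuousOn (fun t => K t * Complex.exp (z * d t)) (Set.uIcc a b) :=
    fun z => hK.mul (Complex.continuous_exp.comp_continuousOn (continuousOn_const.mul hd))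
  have hcont' : ∀ z : ℂ, ContinuousOn (fun t => K t * (Complex.exp (z * d t) * d t))
      (Set.uIcc a b) := fun z =>
    hK.mul ((Complex.continuous_exp.comp_continuousOn (continuousOn_const.mul hd)).mul hd)
  have key := intervalIntegral.hasDerivAt_integral_of_dominated_loc_of_deriv_le
    (F := fun z t => K t * Complex.exp (z * d t))
    (F' := fun z t => K t * (Complex.exp (z * d t) * d t)) (x₀ := z₀) (a := a) (b := b)
    (μ := MeasureTheory.volume)
    (bound := fun t => ‖K t‖ * (Real.exp ((‖z₀‖ + 1) * ‖d t‖) * ‖d t‖))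
    (s := Metric.ball z₀ 1) (Metric.ball_mem_nhds z₀ one_pos) ?_ ?_ ?_ ?_ ?_ ?_
  · exact key.2.differentiableAt
  · exact Filter.Eventually.of_forall fun z =>
      ((hcont z).mono Set.uIoc_subset_uIcc).aestronglyMeasurable measurableSet_uIoc
  · exact (hcont z₀).intervalIntegrable
  · exact ((hcont' z₀).mono Set.uIoc_subset_uIcc).aestronglyMeasurable measurableSet_uIoc
  · refine Filter.Eventually.of_forall fun t ht z hz => ?_
    have hz' : ‖z‖ ≤ ‖z₀‖ + 1 := by
      have := mem_ball_iff_norm.1 hz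
      calc ‖z‖ = ‖z₀ + (z - z₀)‖ := by ring_nf
        _ ≤ ‖z₀‖ + ‖z - z₀‖ := norm_add_le _ _
        _ ≤ ‖z₀‖ + 1 := by linarith
    have hexp : ‖Complex.exp (z * d t)‖ ≤ Real.exp ((‖z₀‖ + 1) * ‖d t‖) := by
      rw [Complex.norm_exp]
      refine Real.exp_le_exp.2 ?_
      calc (z * d t).re ≤ ‖z * d t‖ := Complex.re_le_norm _
        _ = ‖z‖ * ‖d t‖ := by rw [norm_mul]
        _ ≤ (‖z₀‖ + 1) * ‖d t‖ := mul_le_mul_of_nonneg_right hz' (norm_nonneg _)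
    calc ‖K t * (Complex.exp (z * d t) * d t)‖
        = ‖K t‖ * (‖Complex.exp (z * d t)‖ * ‖d t‖) := by rw [norm_mul, norm_mul]
      _ ≤ ‖K t‖ * (Real.exp ((‖z₀‖ + 1) * ‖d t‖) * ‖d t‖) :=
          mul_le_mul_of_nonneg_left
            (mul_le_mul_of_nonneg_right hexp (norm_nonneg _)) (norm_nonneg _)
  · exact (((hK.norm.mul ((Real.continuous_exp.comp_continuousOn
      (continuousOn_const.mul hd.norm)).mul hd.norm))).intervalIntegrable)
  · refine Filter.Eventually.of_forall fun t ht z hz => ?_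
    have := (((hasDerivAt_id z).mul_const (d t)).cexp).const_mul (K t)
    simpa using this

lemma vert_diff {U : Set ℂ} {g : ℂ → ℂ} (hg : DifferentiableOn ℂ g U)
    (x a b : ℝ)
    (hsub : ∀ ψ ∈ Set.uIcc a b, Complex.exp ((x : ℂ) + ψ * Complex.I) ∈ U) :
    Differentiable ℂ (VertB g x a b) := by
  have hc : Continuous fun ψ : ℝ => (x : ℂ) + ψ * Complex.I := by fun_prop
  have hK : ContinuousOn (fun ψ : ℝ => g (Complex.exp ((x : ℂ) + ψ * Complex.I)) *
      Complex.exp ((x : ℂ) + ψ * Complex.I) *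
      Complex.exp (-(((x : ℂ) + ψ * Complex.I) - Real.pi * Complex.I))) (Set.uIcc a b) := by
    refine ContinuousOn.mul (ContinuousOn.mul ?_ (by fun_prop)) (by fun_prop)
    exact hg.continuousOn.comp (Complex.continuous_exp.comp hc).continuousOn
      fun ψ hψ => hsub ψ hψ
  have hd : ContinuousOn (fun ψ : ℝ => -(((x : ℂ) + ψ * Complex.I) - Real.pi * Complex.I))
      (Set.uIcc a b) := by fun_prop
  have := (diff_param hK hd).const_smul (Complex.I)
  convert this using 1 <;> try rfl
  funext z
  rw [VertB, Pi.smul_apply]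
  congr 1
  exact intervalIntegral.integral_congr fun ψ hψ => Hker_split g z _

lemma horiz_diff {U : Set ℂ} {g : ℂ → ℂ} (hg : DifferentiableOn ℂ g U)
    (ψ a b : ℝ)
    (hsub : ∀ x ∈ Set.uIcc a b, Complex.exp ((x : ℂ) + ψ * Complex.I) ∈ U) :
    Differentiable ℂ (HorizB g ψ a b) := by
  have hc : Continuous fun x : ℝ => (x : ℂ) + ψ * Complex.I := by fun_prop
  have hK : ContinuousOn (fun x : ℝ => g (Complex.exp ((x : ℂ) + ψ * Complex.I)) *
      Complex.exp ((x : ℂ) + ψ * Complex.I) *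
      Complex.exp (-(((x : ℂ) + ψ * Complex.I) - Real.pi * Complex.I))) (Set.uIcc a b) := by
    refine ContinuousOn.mul (ContinuousOn.mul ?_ (by fun_prop)) (by fun_prop)
    exact hg.continuousOn.comp (Complex.continuous_exp.comp hc).continuousOn
      fun x hx => hsub x hx
  have hd : ContinuousOn (fun x : ℝ => -(((x : ℂ) + ψ * Complex.I) - Real.pi * Complex.I))
      (Set.uIcc a b) := by fun_prop
  have := diff_param hK hd
  convert this using 2 with z
  rw [HorizB]
  exact intervalIntegral.integral_congr fun x hx => Hker_split g z _

section Geometry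

variable {U : Set ℂ} {g : ℂ → ℂ} {β ℓR : ℝ}

/-- Standing geometric assumptions. -/
structure Geom (U : Set ℂ) (β ℓR : ℝ) : Prop where
  hβ : 0 < β
  hβπ : β < Real.pi
  hℓR : 0 < ℓR
  mem : ∀ s : ℂ, s.re < 0 ∨ (0 ≤ s.re ∧ s.re ≤ ℓR ∧
    (|s.im| ≤ β ∨ |s.im - 2 * Real.pi| ≤ β)) → Complex.exp s ∈ U

lemma Geom.memℓ (hG : Geom U β ℓR) {ℓ : ℝ} (hℓ : ℓ < 0) (ψ : ℝ) :
    Complex.exp ((ℓ : ℂ) + ψ * Complex.I) ∈ U :=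
  hG.mem _ (Or.inl (by simp [hℓ]))

lemma Geom.memβ (hG : Geom U β ℓR) {x : ℝ} (hx : x ≤ ℓR) :
    Complex.exp ((x : ℂ) + β * Complex.I) ∈ U := by
  rcases lt_or_ge x 0 with h | h
  · exact hG.mem _ (Or.inl (by simp [h]))
  · refine hG.mem _ (Or.inr ⟨by simp [h], by simp [hx], Or.inl ?_⟩)
    simp [_root_.abs_of_nonneg hG.hβ.le]

lemma Geom.memVR1 (hG : Geom U β ℓR) :
    ∀ ψ ∈ Set.uIcc 0 β, Complex.exp ((ℓR : ℂ) + ψ * Complex.I) ∈ U := by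
  intro ψ hψ
  rw [Set.uIcc_of_le hG.hβ.le] at hψ
  refine hG.mem _ (Or.inr ⟨by simp [hG.hℓR.le], by simp, Or.inl ?_⟩)
  have : (((ℓR : ℂ)) + (ψ : ℂ) * Complex.I).im = ψ := by simp
  rw [this, abs_le]
  exact ⟨by linarith [hψ.1, hG.hβ.le], hψ.2⟩

lemma Geom.memVR2 (hG : Geom U β ℓR) :
    ∀ ψ ∈ Set.uIcc (2 * Real.pi - β) (2 * Real.pi),
      Complex.exp ((ℓR : ℂ) + ψ * Complex.I) ∈ U := by
  intro ψ hψ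
  rw [Set.uIcc_of_le (by linarith [hG.hβ.le] : 2 * Real.pi - β ≤ 2 * Real.pi)] at hψ
  refine hG.mem _ (Or.inr ⟨by simp [hG.hℓR.le], by simp, Or.inr ?_⟩)
  have : (((ℓR : ℂ)) + (ψ : ℂ) * Complex.I).im = ψ := by simp
  rw [this, abs_le]
  exact ⟨by linarith [hψ.1], by linarith [hψ.2, hG.hβ.le]⟩

lemma Geom.mem2πβ (hG : Geom U β ℓR) {x : ℝ} (hx : x ≤ ℓR) :
    Complex.exp ((x : ℂ) + ((2 * Real.pi - β : ℝ) : ℂ) * Complex.I) ∈ U := by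
  rcases lt_or_ge x 0 with h | h
  · exact hG.mem _ (Or.inl (by simp [h]))
  · refine hG.mem _ (Or.inr ⟨by simp [h], by simp [hx], Or.inr ?_⟩)
    have him : (((x : ℂ) + ((2 * Real.pi - β : ℝ) : ℂ) * Complex.I)).im
        = 2 * Real.pi - β := by simp
    rw [him, show 2 * Real.pi - β - 2 * Real.pi = -β by ring, abs_neg,
      _root_.abs_of_nonneg hG.hβ.le]

lemma Geom.memQ1 (hG : Geom U β ℓR) {ℓ : ℝ} (hℓ : ℓ < 0) :
    ∀ s : ℂ, s.re ∈ Set.uIcc ℓ ℓR → s.im ∈ Set.uIcc 0 β → Complex.exp s ∈ U := by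
  intro s hre him
  rw [Set.uIcc_of_le (by linarith [hG.hℓR] : ℓ ≤ ℓR)] at hre
  rw [Set.uIcc_of_le hG.hβ.le] at him
  rcases lt_or_ge s.re 0 with h | h
  · exact hG.mem _ (Or.inl h)
  · exact hG.mem _ (Or.inr ⟨h, hre.2,
      Or.inl (abs_le.2 ⟨by linarith [him.1, hG.hβ.le], him.2⟩)⟩)

lemma Geom.memQ2 (hG : Geom U β ℓR) {ℓ : ℝ} (hℓ : ℓ < 0) :
    ∀ s : ℂ, s.re ∈ Set.uIcc ℓ ℓR → s.im ∈ Set.uIcc (2 * Real.pi - β) (2 * Real.pi) →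
      Complex.exp s ∈ U := by
  intro s hre him
  rw [Set.uIcc_of_le (by linarith [hG.hℓR] : ℓ ≤ ℓR)] at hre
  rw [Set.uIcc_of_le (by linarith [hG.hβ.le] : 2 * Real.pi - β ≤ 2 * Real.pi)] at him
  rcases lt_or_ge s.re 0 with h | h
  · exact hG.mem _ (Or.inl h)
  · exact hG.mem _ (Or.inr ⟨h, hre.2,
      Or.inr (abs_le.2 ⟨by linarith [him.1], by linarith [him.2, hG.hβ.le]⟩)⟩)

lemma Geom.memVℓ (hG : Geom U β ℓR) {ℓ : ℝ} (hℓ : ℓ < 0) (a b : ℝ) :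
    ∀ ψ ∈ Set.uIcc a b, Complex.exp ((ℓ : ℂ) + ψ * Complex.I) ∈ U :=
  fun ψ _ => hG.memℓ hℓ ψ

lemma Geom.memHβ (hG : Geom U β ℓR) {aa bb : ℝ} (ha : aa ≤ ℓR) (hb : bb ≤ ℓR) :
    ∀ x ∈ Set.uIcc aa bb, Complex.exp ((x : ℂ) + β * Complex.I) ∈ U := by
  intro x hx
  refine hG.memβ ?_
  rcases Set.mem_uIcc.1 hx with ⟨_, h⟩ | ⟨_, h⟩ <;> linarith

lemma Geom.memH2πβ (hG : Geom U β ℓR) {aa bb : ℝ} (ha : aa ≤ ℓR) (hb : bb ≤ ℓR) :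
    ∀ x ∈ Set.uIcc aa bb,
      Complex.exp ((x : ℂ) + ((2 * Real.pi - β : ℝ) : ℂ) * Complex.I) ∈ U := by
  intro x hx
  refine hG.mem2πβ ?_
  rcases Set.mem_uIcc.1 hx with ⟨_, h⟩ | ⟨_, h⟩ <;> linarith

/-- Key representation: the bulge contour equals the circle plus horizontal boundary terms. -/
lemma P_rep (hg : DifferentiableOn ℂ g U) (hG : Geom U β ℓR)
    {ℓ : ℝ} (hℓ : ℓ < 0) (z : ℂ) :
    PB g β ℓR ℓ z = VertB g ℓ 0 (2 * Real.pi) z + HorizB g (2 * Real.pi) ℓ ℓR z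
      - HorizB g 0 ℓ ℓR z := by
  have hQ1 := rect_eq hg z ℓ ℓR 0 β (hG.memQ1 hℓ)
  have hQ2 := rect_eq hg z ℓ ℓR (2 * Real.pi - β) (2 * Real.pi) (hG.memQ2 hℓ)
  have hV1 := vert_add hg z ℓ 0 β (2 * Real.pi - β) (hG.memVℓ hℓ _ _) (hG.memVℓ hℓ _ _)
  have hV2 := vert_add hg z ℓ 0 (2 * Real.pi - β) (2 * Real.pi)
    (hG.memVℓ hℓ _ _) (hG.memVℓ hℓ _ _)
  rw [PB]
  linear_combination hQ1 + hQ2 + hV1 + hV2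

/-- Independence of the inner radius. -/
lemma P_indep (hg : DifferentiableOn ℂ g U) (hG : Geom U β ℓR)
    {ℓ ℓ' : ℝ} (hℓ : ℓ < 0) (hℓ' : ℓ' < 0) (z : ℂ) :
    PB g β ℓR ℓ z = PB g β ℓR ℓ' z := by
  have hmem : ∀ s : ℂ, s.re ∈ Set.uIcc ℓ' ℓ →
      s.im ∈ Set.uIcc β (2 * Real.pi - β) → Complex.exp s ∈ U := by
    intro s hre _
    refine hG.mem _ (Or.inl ?_)
    rcases Set.mem_uIcc.1 hre with ⟨_, h⟩ | ⟨_, h⟩ <;> linarith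
  have hR := rect_eq hg z ℓ' ℓ β (2 * Real.pi - β) hmem
  have hℓR : (0:ℝ) < ℓR := hG.hℓR
  have hA1 := horiz_add hg z β ℓ' ℓ ℓR
    (hG.memHβ (by linarith) (by linarith)) (hG.memHβ (by linarith) le_rfl)
  have hA2 := horiz_add hg z (2 * Real.pi - β) ℓ' ℓ ℓR
    (hG.memH2πβ (by linarith) (by linarith)) (hG.memH2πβ (by linarith) le_rfl)
  rw [PB, PB]
  linear_combination hR - hA1 + hA2

end Geometry

/-- Periodicity at integer arguments. -/
lemma Hker_periodic (g : ℂ → ℂ) (m : ℕ) (x : ℝ) :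
    Hker g (m : ℂ) ((x : ℂ) + ((2 * Real.pi : ℝ) : ℂ) * Complex.I)
      = Hker g (m : ℂ) ((x : ℂ) + ((0 : ℝ) : ℂ) * Complex.I) := by
  have hper : Complex.exp ((x : ℂ) + ((2 * Real.pi : ℝ) : ℂ) * Complex.I)
      = Complex.exp ((x : ℂ) + ((0 : ℝ) : ℂ) * Complex.I) := by
    push_cast
    rw [show (x : ℂ) + 2 * Real.pi * Complex.I = (x + 0 * Complex.I) + 2 * Real.pi * Complex.I
      by ring, Complex.exp_add, Complex.exp_two_pi_mul_I, mul_one]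
  rw [Hker, Hker, hper]
  congr 1
  have : -((m : ℂ) + 1) * (((x : ℂ) + ((2 * Real.pi : ℝ) : ℂ) * Complex.I) - Real.pi * Complex.I)
      = -((m : ℂ) + 1) * (((x : ℂ) + ((0 : ℝ) : ℂ) * Complex.I) - Real.pi * Complex.I)
        + (-((m : ℤ) + 1) : ℤ) * (2 * Real.pi * Complex.I) := by
    push_cast
    ring
  rw [this, Complex.exp_add, Complex.exp_int_mul_two_pi_mul_I, mul_one]

lemma horiz_periodic (g : ℂ → ℂ) (m : ℕ) (a b : ℝ) :
    HorizB g (2 * Real.pi) a b (m : ℂ) = HorizB g 0 a b (m : ℂ) := by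
  rw [HorizB, HorizB]
  exact intervalIntegral.integral_congr fun x _ => Hker_periodic g m x

/-- The vertical full-circle integral at an integer equals a circle integral. -/
lemma vert_eq_circle (g : ℂ → ℂ) (m : ℕ) {ℓ : ℝ} :
    VertB g ℓ 0 (2 * Real.pi) (m : ℂ)
      = (-1 : ℂ) ^ (m + 1) •
        ∮ z in C(0, Real.exp ℓ), (z : ℂ)⁻¹ ^ m • ((z : ℂ)⁻¹ • g z) := by
  rw [VertB, circleIntegral]
  rw [← intervalIntegral.integral_smul, ← intervalIntegral.integral_smul]
  refine intervalIntegral.integral_congr fun ψ hψ => ?_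
  have hw : circleMap 0 (Real.exp ℓ) ψ = Complex.exp ((ℓ : ℂ) + ψ * Complex.I) := by
    rw [circleMap, Complex.exp_add, Complex.exp_mul_I]
    push_cast [Complex.ofReal_exp]
    ring
  have hwne : circleMap 0 (Real.exp ℓ) ψ ≠ 0 := circleMap_ne_center (by positivity)
  rw [deriv_circleMap, Hker, hw]
  have hexp : Complex.exp (-((m : ℂ) + 1) * (((ℓ : ℂ) + ψ * Complex.I) - Real.pi * Complex.I))
      = (-1 : ℂ) ^ (m + 1) * (Complex.exp ((ℓ : ℂ) + ψ * Complex.I) ^ (m + 1))⁻¹ := by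
    rw [show -((m : ℂ) + 1) * (((ℓ : ℂ) + ψ * Complex.I) - Real.pi * Complex.I)
        = ((m : ℕ) + 1 : ℕ) * (Real.pi * Complex.I)
          + (-(((m : ℕ) + 1 : ℕ) : ℂ)) * ((ℓ : ℂ) + ψ * Complex.I) by push_cast; ring,
      Complex.exp_add, Complex.exp_nat_mul, Complex.exp_pi_mul_I]
    rw [neg_mul, Complex.exp_neg, Complex.exp_nat_mul]
  rw [hexp]
  set w := Complex.exp ((ℓ : ℂ) + ψ * Complex.I) with hwdef
  have hwne' : w ≠ 0 := Complex.exp_ne_zero _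
  rw [← hw] at hwdef ⊢
  field_simp
  ring

/-- Norm bounds for the segment integrals. -/
lemma vert_norm_le (g : ℂ → ℂ) (x a b : ℝ) (z : ℂ) {M E : ℝ}
    (hg : ∀ ψ ∈ Set.uIcc a b, ‖g (Complex.exp ((x : ℂ) + ψ * Complex.I))‖ ≤ M)
    (hE : ∀ ψ ∈ Set.uIcc a b, -(z.re * x) + z.im * (ψ - Real.pi) ≤ E) :
    ‖VertB g x a b z‖ ≤ M * Real.exp E * |b - a| := by
  have hM : 0 ≤ M := le_trans (norm_nonneg _) (hg a Set.left_mem_uIcc)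
  rw [VertB, norm_smul, Complex.norm_I, one_mul]
  refine intervalIntegral.norm_integral_le_of_norm_le_const fun ψ hψ => ?_
  have hψ' : ψ ∈ Set.uIcc a b := Set.uIoc_subset_uIcc hψ
  rw [Hker_norm]
  have hre : ((x : ℂ) + (ψ : ℂ) * Complex.I).re = x := by simp
  have him : ((x : ℂ) + (ψ : ℂ) * Complex.I).im = ψ := by simp
  rw [hre, him]
  exact mul_le_mul (hg ψ hψ') (Real.exp_le_exp.2 (hE ψ hψ')) (Real.exp_pos _).le hM

lemma horiz_norm_le (g : ℂ → ℂ) (ψ a b : ℝ) (z : ℂ) {M E : ℝ}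
    (hg : ∀ x ∈ Set.uIcc a b, ‖g (Complex.exp ((x : ℂ) + ψ * Complex.I))‖ ≤ M)
    (hE : ∀ x ∈ Set.uIcc a b, -(z.re * x) + z.im * (ψ - Real.pi) ≤ E) :
    ‖HorizB g ψ a b z‖ ≤ M * Real.exp E * |b - a| := by
  have hM : 0 ≤ M := le_trans (norm_nonneg _) (hg a Set.left_mem_uIcc)
  rw [HorizB]
  refine intervalIntegral.norm_integral_le_of_norm_le_const fun x hx => ?_
  have hx' : x ∈ Set.uIcc a b := Set.uIoc_subset_uIcc hx
  rw [Hker_norm]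
  have hre : ((x : ℂ) + (ψ : ℂ) * Complex.I).re = x := by simp
  have him : ((x : ℂ) + (ψ : ℂ) * Complex.I).im = ψ := by simp
  rw [hre, him]
  exact mul_le_mul (hg x hx') (Real.exp_le_exp.2 (hE x hx')) (Real.exp_pos _).le hM

lemma exists_bound_vert {U : Set ℂ} {g : ℂ → ℂ} (hg : DifferentiableOn ℂ g U)
    (x a b : ℝ) (hsub : ∀ ψ ∈ Set.uIcc a b, Complex.exp ((x : ℂ) + ψ * Complex.I) ∈ U) :
    ∃ M : ℝ, ∀ ψ ∈ Set.uIcc a b, ‖g (Complex.exp ((x : ℂ) + ψ * Complex.I))‖ ≤ M :=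
  isCompact_uIcc.exists_bound_of_continuousOn
    (hg.continuousOn.comp (Complex.continuous_exp.comp (by fun_prop)).continuousOn hsub)

lemma exists_bound_horiz {U : Set ℂ} {g : ℂ → ℂ} (hg : DifferentiableOn ℂ g U)
    (ψ a b : ℝ) (hsub : ∀ x ∈ Set.uIcc a b, Complex.exp ((x : ℂ) + ψ * Complex.I) ∈ U) :
    ∃ M : ℝ, ∀ x ∈ Set.uIcc a b, ‖g (Complex.exp ((x : ℂ) + ψ * Complex.I))‖ ≤ M :=
  isCompact_uIcc.exists_bound_of_continuousOn
    (hg.continuousOn.comp (Complex.continuous_exp.comp (by fun_prop)).continuousOn hsub)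

/-- From the radius hypothesis: eventual coefficient bounds. -/
lemma coeff_bound {a : ℕ → ℂ} (hrad : RadiusOne a) {c : ℝ} (hc : 1 < c) :
    ∀ᶠ m : ℕ in Filter.atTop, ‖a m‖ ≤ c ^ m := by
  have hrad' : Filter.limsup (fun m : ℕ => ‖a m‖ ^ (1 / (m : ℝ))) Filter.atTop = 1 := hrad
  have hS : {x : ℝ | ∀ᶠ m : ℕ in Filter.atTop, ‖a m‖ ^ (1 / (m : ℝ)) ≤ x}.Nonempty := by
    by_contra h
    rw [Set.not_nonempty_iff_eq_empty] at h
    have h0 : Filter.limsup (fun m : ℕ => ‖a m‖ ^ (1 / (m : ℝ))) Filter.atTop = 0 := by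
      rw [Filter.limsup_eq, h, Real.sInf_empty]
    rw [hrad'] at h0; norm_num at h0
  have hlt : sInf {x : ℝ | ∀ᶠ m : ℕ in Filter.atTop, ‖a m‖ ^ (1 / (m : ℝ)) ≤ x} < c := by
    have heq : Filter.limsup (fun m : ℕ => ‖a m‖ ^ (1 / (m : ℝ))) Filter.atTop
        = sInf {x : ℝ | ∀ᶠ m : ℕ in Filter.atTop, ‖a m‖ ^ (1 / (m : ℝ)) ≤ x} :=
      Filter.limsup_eq
    rw [heq] at hrad'; rw [hrad']; exact hc
  obtain ⟨x, hx, hxc⟩ := exists_lt_of_csInf_lt hS hlt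
  have hx0 : 0 ≤ x := by
    by_contra h
    push_neg at h
    obtain ⟨m, hm⟩ := hx.exists
    have := Real.rpow_nonneg (norm_nonneg (a m)) (1 / (m : ℝ))
    linarith
  filter_upwards [hx, Filter.eventually_ge_atTop 1] with m hm hm1
  have hmne : (m : ℝ) ≠ 0 := by positivity
  have hrw : ‖a m‖ = (‖a m‖ ^ (1 / (m : ℝ))) ^ (m : ℝ) := by
    rw [← Real.rpow_mul (norm_nonneg _), one_div_mul_cancel hmne, Real.rpow_one]
  rw [hrw]
  calc (‖a m‖ ^ (1 / (m : ℝ))) ^ (m : ℝ) ≤ x ^ (m : ℝ) :=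
        Real.rpow_le_rpow (Real.rpow_nonneg (norm_nonneg _) _) hm (by positivity)
    _ = x ^ m := by rw [Real.rpow_natCast]
    _ ≤ c ^ m := pow_le_pow_left₀ hx0 hxc.le m

lemma radius_ge_one {a : ℕ → ℂ} (hrad : RadiusOne a) :
    1 ≤ (FormalMultilinearSeries.ofScalars ℂ a).radius := by
  refine ENNReal.le_of_forall_nnreal_lt fun ρ hρ => ?_
  rcases eq_or_ne ρ 0 with rfl | hρ0
  · simp
  have hρ1 : (ρ : ℝ) < 1 := by exact_mod_cast hρ
  have hρpos : (0 : ℝ) < ρ := by positivity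
  set c : ℝ := ((ρ : ℝ)⁻¹ + 1) / 2 with hc
  have hc1 : 1 < c := by
    have : 1 < (ρ : ℝ)⁻¹ := (one_lt_inv₀ hρpos).2 hρ1
    rw [hc]; linarith
  have hcρ : c * ρ < 1 := by
    have h2 : (ρ : ℝ)⁻¹ * ρ = 1 := inv_mul_cancel₀ (by positivity)
    have : c * ρ = ((ρ:ℝ)⁻¹ * ρ + ρ) / 2 := by rw [hc]; ring
    rw [this, h2]; linarith
  refine FormalMultilinearSeries.le_radius_of_eventually_le _ 1 ?_
  filter_upwards [coeff_bound hrad hc1] with m hm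
  rw [FormalMultilinearSeries.ofScalars_norm]
  calc ‖a m‖ * (ρ : ℝ) ^ m ≤ c ^ m * ρ ^ m :=
        mul_le_mul_of_nonneg_right hm (by positivity)
    _ = (c * ρ) ^ m := by rw [mul_pow]
    _ ≤ 1 ^ m := pow_le_pow_left₀ (by positivity) hcρ.le m
    _ = 1 := one_pow m

/-- The coefficients are given by Cauchy's formula over any circle of radius `< 1`. -/
lemma coeff_eq_circleIntegral {a : ℕ → ℂ} {U : Set ℂ} {g : ℂ → ℂ}
    (hrad : RadiusOne a) (hball : Metric.ball (0 : ℂ) 1 ⊆ U)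
    (hg : DifferentiableOn ℂ g U)
    (hgf : ∀ z ∈ Metric.ball (0 : ℂ) 1, g z = powerSum a z)
    {r : ℝ} (hr0 : 0 < r) (hr1 : r < 1) (m : ℕ) :
    a m = (2 * Real.pi * Complex.I : ℂ)⁻¹ •
      ∮ z in C(0, r), (z : ℂ)⁻¹ ^ m • ((z : ℂ)⁻¹ • g z) := by
  set q := FormalMultilinearSeries.ofScalars ℂ a with hq
  have hqsum : HasFPowerSeriesOnBall (powerSum a) q 0 1 := by
    have h0 : 0 < q.radius := lt_of_lt_of_le one_pos (radius_ge_one hrad)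
    have h1 := q.hasFPowerSeriesOnBall h0
    have h2 : q.sum = powerSum a := by
      funext z
      rw [FormalMultilinearSeries.sum, powerSum]
      exact tsum_congr fun n => by
        rw [FormalMultilinearSeries.ofScalars_apply_eq]; rw [smul_eq_mul]
    rw [h2] at h1
    exact h1.mono one_pos (radius_ge_one hrad)
  have hgq : HasFPowerSeriesAt g q 0 := by
    refine (hqsum.hasFPowerSeriesAt).congr ?_
    have : Metric.ball (0:ℂ) 1 ∈ 𝓝 (0:ℂ) := Metric.ball_mem_nhds 0 one_pos
    exact Filter.eventuallyEq_of_mem this fun z hz => (hgf z hz).symm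
  set R : NNReal := ⟨r, hr0.le⟩ with hR
  have hgc : HasFPowerSeriesOnBall g (cauchyPowerSeries g 0 R) 0 R := by
    refine DifferentiableOn.hasFPowerSeriesOnBall ?_ (by exact_mod_cast hr0)
    refine hg.mono (subset_trans ?_ hball)
    intro w hw
    simp only [Metric.mem_closedBall, Metric.mem_ball] at hw ⊢
    have : (R : ℝ) = r := rfl
    rw [this] at hw; linarith
  have heq : q = cauchyPowerSeries g 0 R :=
    hgq.eq_formalMultilinearSeries hgc.hasFPowerSeriesAt
  have h1 : a m = q m (fun _ => 1) := by
    rw [hq, FormalMultilinearSeries.ofScalars_apply_eq]; simp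
  rw [h1, heq, cauchyPowerSeries_apply]
  congr 1
  refine circleIntegral.integral_congr hr0.le fun z hz => ?_
  simp [div_eq_mul_inv]

lemma arcI_compact (D : ℝ) : IsCompact (arcI D) := by
  have : arcI D = (fun θ : ℝ => Complex.exp ((θ : ℂ) * Complex.I)) ''
      Set.Icc (-(Real.pi * D)) (Real.pi * D) := by
    ext w
    simp only [arcI, Set.mem_setOf_eq, Set.mem_image, Set.mem_Icc]
    constructor
    · rintro ⟨θ, hθ, rfl⟩; exact ⟨θ, abs_le.1 hθ, rfl⟩
    · rintro ⟨θ, hθ, rfl⟩; exact ⟨θ, abs_le.2 hθ, rfl⟩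
  rw [this]
  exact isCompact_Icc.image (by fun_prop)

/-- Construction of the geometric data from the analytic continuation. -/
lemma exists_geom {U : Set ℂ} (hU : IsOpen U) (hball : Metric.ball (0:ℂ) 1 ⊆ U)
    {D : ℝ} (hD0 : 0 ≤ D) (hD1 : D < 1) (harc : arcI D ⊆ U) :
    ∃ β ℓR : ℝ, 0 < β ∧ β < Real.pi ∧ Real.pi * D < β ∧ 0 < ℓR ∧
      ∀ s : ℂ, s.re < 0 ∨ (0 ≤ s.re ∧ s.re ≤ ℓR ∧
        (|s.im| ≤ β ∨ |s.im - 2 * Real.pi| ≤ β)) → Complex.exp s ∈ U := by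
  obtain ⟨δ, hδ, hthick⟩ := (arcI_compact D).exists_thickening_subset_open hU harc
  have hπ := Real.pi_pos
  set δ₂ : ℝ := min (δ / 4) (1 / 2) with hδ₂def
  have hδ₂pos : 0 < δ₂ := by positivity
  have hδ₂a : δ₂ ≤ δ / 4 := min_le_left _ _
  have hδ₂b : δ₂ ≤ 1 / 2 := min_le_right _ _
  set β : ℝ := min (Real.pi * D + δ₂) ((Real.pi * D + Real.pi) / 2) with hβdef
  have hβpos : 0 < β := lt_min (by positivity) (by nlinarith)
  have hβltπ : β < Real.pi := lt_of_le_of_lt (min_le_right _ _) (by nlinarith)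
  have hβgt : Real.pi * D < β := lt_min (by linarith) (by nlinarith)
  have hβle : β ≤ Real.pi * D + δ₂ := min_le_left _ _
  set ℓR : ℝ := Real.log (1 + δ₂) with hℓRdef
  have hℓRpos : 0 < ℓR := Real.log_pos (by linarith)
  refine ⟨β, ℓR, hβpos, hβltπ, hβgt, hℓRpos, ?_⟩
  have key : ∀ s : ℂ, 0 ≤ s.re → s.re ≤ ℓR → |s.im| ≤ β → Complex.exp s ∈ U := by
    intro s h0 hR him
    set c : ℝ := max (-(Real.pi * D)) (min s.im (Real.pi * D)) with hcdef
    have hc1 : |c| ≤ Real.pi * D := by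
      rw [abs_le]
      exact ⟨le_max_left _ _, max_le (by nlinarith) (min_le_right _ _)⟩
    have harcmem : Complex.exp ((c : ℂ) * Complex.I) ∈ arcI D := ⟨c, hc1, rfl⟩
    have himc : |s.im - c| ≤ δ₂ := by
      rcases le_total s.im (Real.pi * D) with h1 | h1
      · rcases le_total (-(Real.pi * D)) s.im with h2 | h2
        · have : c = s.im := by rw [hcdef, min_eq_left h1, max_eq_right h2]
          simp [this, hδ₂pos.le]
        · have : c = -(Real.pi * D) := by rw [hcdef, min_eq_left h1, max_eq_left h2]
          rw [this, abs_le]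
          have : -β ≤ s.im := (abs_le.1 him).1
          constructor <;> nlinarith
      · have : c = Real.pi * D := by
          rw [hcdef, min_eq_right h1, max_eq_right (by nlinarith)]
        rw [this, abs_le]
        have : s.im ≤ β := (abs_le.1 him).2
        constructor <;> nlinarith
    have hsplit : Complex.exp s
        = Complex.exp ((s.re : ℂ)) * Complex.exp ((s.im : ℂ) * Complex.I) := by
      rw [← Complex.exp_add]
      congr 1
      exact (Complex.re_add_im s).symm
    have hd1 : dist (Complex.exp s) (Complex.exp ((s.im : ℂ) * Complex.I)) ≤ δ₂ := by
      rw [hsplit, dist_eq_norm]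
      have heq : Complex.exp ((s.re : ℂ)) * Complex.exp ((s.im : ℂ) * Complex.I)
          - Complex.exp ((s.im : ℂ) * Complex.I)
          = Complex.exp ((s.im : ℂ) * Complex.I) * (Complex.exp ((s.re : ℂ)) - 1) := by ring
      rw [heq, norm_mul]
      have h1 : ‖Complex.exp ((s.im : ℂ) * Complex.I)‖ = 1 := by
        rw [Complex.norm_exp]
        simp
      rw [h1, one_mul, ← Complex.ofReal_exp, ← Complex.ofReal_one, ← Complex.ofReal_sub,
        Complex.norm_real, Real.norm_eq_abs]
      rw [_root_.abs_of_nonneg (by simp [Real.one_le_exp_iff, h0] : (0:ℝ) ≤ Real.exp s.re - 1)]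
      have : Real.exp s.re ≤ 1 + δ₂ := by
        calc Real.exp s.re ≤ Real.exp ℓR := Real.exp_le_exp.2 hR
          _ = 1 + δ₂ := Real.exp_log (by linarith)
      linarith
    have hd2 : dist (Complex.exp ((s.im : ℂ) * Complex.I))
        (Complex.exp ((c : ℂ) * Complex.I)) ≤ 2 * δ₂ := by
      rw [dist_eq_norm]
      have heq : Complex.exp ((s.im : ℂ) * Complex.I) - Complex.exp ((c : ℂ) * Complex.I)
          = Complex.exp ((c : ℂ) * Complex.I)
            * (Complex.exp (((s.im - c : ℝ) : ℂ) * Complex.I) - 1) := by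
        rw [mul_sub, mul_one, ← Complex.exp_add]
        congr 2
        push_cast
        ring
      rw [heq, norm_mul]
      have h1 : ‖Complex.exp ((c : ℂ) * Complex.I)‖ = 1 := by
        rw [Complex.norm_exp]; simp
      rw [h1, one_mul]
      have habs : ‖((s.im - c : ℝ) : ℂ) * Complex.I‖ = |s.im - c| := by
        rw [norm_mul, Complex.norm_I, mul_one, Complex.norm_real, Real.norm_eq_abs]
      have := Complex.norm_exp_sub_one_le (x := ((s.im - c : ℝ) : ℂ) * Complex.I)
        (by rw [habs]; linarith)
      rw [habs] at this
      linarith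
    have : dist (Complex.exp s) (Complex.exp ((c : ℂ) * Complex.I)) < δ :=
      lt_of_le_of_lt (dist_triangle _ _ _) (by linarith)
    exact hthick (Metric.mem_thickening_iff.2 ⟨_, harcmem, this⟩)
  intro s hs
  rcases hs with h | ⟨h0, hR, him | him⟩
  · refine hball ?_
    simp only [Metric.mem_ball, dist_zero_right, Complex.norm_exp]
    exact Real.exp_lt_one_iff.2 h
  · exact key s h0 hR him
  · have hper : Complex.exp s = Complex.exp (s - ((2 * Real.pi : ℝ) : ℂ) * Complex.I) := by
      rw [show s = (s - ((2 * Real.pi : ℝ) : ℂ) * Complex.I) + 2 * Real.pi * Complex.I by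
        push_cast; ring]
      rw [Complex.exp_add, Complex.exp_two_pi_mul_I, mul_one]
      congr 1
      push_cast
      ring
    rw [hper]
    refine key _ (by simpa using h0) (by simpa using hR) ?_
    have : (s - ((2 * Real.pi : ℝ) : ℂ) * Complex.I).im = s.im - 2 * Real.pi := by simp
    rw [this]
    exact him

end BernNec

set_option maxHeartbeats 2000000 in
/-- necessity part of Bernstein's theorem, Theorem C. -/
theorem bernstein_necessity (a : ℕ → ℂ) (hrad : RadiusOne a)
    (D : ℝ) (hD : D ∈ Set.Ico (0 : ℝ) 1)
    (hcont : ContinuesTo a (arcI D)) :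
    ∃ α : ℝ, 0 < α ∧ ∃ b : ℝ, b < 1 - D ∧ ∃ F : ℂ → ℂ,
      DifferentiableOn ℂ F {z : ℂ | z ≠ 0 ∧ |Complex.arg z| < α} ∧
      (∀ m : ℕ, 0 < m → a m = (-1 : ℂ) ^ m * F (m : ℂ)) ∧
      ∀ θ : ℝ, |θ| < α → ∀ ε > 0, ∀ᶠ t : ℝ in Filter.atTop,
        Real.log ‖F ((t : ℂ) * Complex.exp ((θ : ℂ) * Complex.I))‖ / t ≤
          Real.pi * b * |Real.sin θ| + ε := by
  obtain ⟨hD0, hD1⟩ := hD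
  obtain ⟨U, hUopen, hball, harc, g, hgdiff, hgf⟩ := hcont
  obtain ⟨β, ℓR, hβpos, hβπ, hβD, hℓRpos, hmem⟩ :=
    BernNec.exists_geom hUopen hball hD0 hD1 harc
  have hπ := Real.pi_pos
  have hG : BernNec.Geom U β ℓR := ⟨hβpos, hβπ, hℓRpos, hmem⟩
  set b : ℝ := 1 - β / Real.pi with hbdef
  have hπb : Real.pi * b = Real.pi - β := by
    rw [hbdef]; field_simp
  have hbpos : 0 < b := by
    rw [hbdef]
    have : β / Real.pi < 1 := (div_lt_one hπ).2 hβπ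
    linarith
  have hbD : b < 1 - D := by
    rw [hbdef]
    have : D < β / Real.pi := (lt_div_iff₀ hπ).2 (by linarith [hβD])
    linarith
  set α : ℝ := min (Real.pi / 4) (ℓR / (2 * Real.pi)) with hαdef
  have hαpos : 0 < α := lt_min (by positivity) (by positivity)
  refine ⟨α, hαpos, b, hbD,
    fun z => -(2 * (Real.pi : ℂ) * Complex.I)⁻¹ * BernNec.PB g β ℓR (-1) z, ?_, ?_, ?_⟩
  · -- differentiability
    have h1 : Differentiable ℂ (BernNec.VertB g ℓR 0 β) :=
      BernNec.vert_diff hgdiff _ _ _ hG.memVR1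
    have h2 : Differentiable ℂ (BernNec.HorizB g β (-1) ℓR) :=
      BernNec.horiz_diff hgdiff _ _ _ (hG.memHβ (by linarith) le_rfl)
    have h3 : Differentiable ℂ (BernNec.VertB g (-1) β (2 * Real.pi - β)) :=
      BernNec.vert_diff hgdiff _ _ _ (hG.memVℓ (by norm_num) _ _)
    have h4 : Differentiable ℂ (BernNec.HorizB g (2 * Real.pi - β) (-1) ℓR) :=
      BernNec.horiz_diff hgdiff _ _ _ (hG.memH2πβ (by linarith) le_rfl)
    have h5 : Differentiable ℂ (BernNec.VertB g ℓR (2 * Real.pi - β) (2 * Real.pi)) :=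
      BernNec.vert_diff hgdiff _ _ _ hG.memVR2
    have hPdiff : Differentiable ℂ (BernNec.PB g β ℓR (-1)) := by
      have : BernNec.PB g β ℓR (-1) = fun z => BernNec.VertB g ℓR 0 β z
          - BernNec.HorizB g β (-1) ℓR z + BernNec.VertB g (-1) β (2 * Real.pi - β) z
          + BernNec.HorizB g (2 * Real.pi - β) (-1) ℓR z
          + BernNec.VertB g ℓR (2 * Real.pi - β) (2 * Real.pi) z := by
        funext z; rw [BernNec.PB]
      rw [this]
      exact (((h1.sub h2).add h3).add h4).add h5
    exact ((hPdiff.const_mul _).differentiableOn)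
  · -- coefficients
    intro m hm
    have hr0 : (0:ℝ) < Real.exp (-1) := Real.exp_pos _
    have hr1 : Real.exp (-1 : ℝ) < 1 := Real.exp_lt_one_iff.2 (by norm_num)
    have hco := BernNec.coeff_eq_circleIntegral hrad hball hgdiff hgf hr0 hr1 m
    have h2πI : (2 * (Real.pi : ℂ) * Complex.I) ≠ 0 := by
      simp [Real.pi_ne_zero, Complex.I_ne_zero]
    have hOval : (∮ z in C(0, Real.exp (-1)), (z : ℂ)⁻¹ ^ m • ((z : ℂ)⁻¹ • g z))
        = (2 * (Real.pi : ℂ) * Complex.I) * a m := by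
      rw [hco, smul_eq_mul, ← mul_assoc, mul_inv_cancel₀ h2πI, one_mul]
    have hPm : BernNec.PB g β ℓR (-1) (m : ℂ)
        = (-1 : ℂ) ^ (m + 1) * ((2 * (Real.pi : ℂ) * Complex.I) * a m) := by
      rw [BernNec.P_rep hgdiff hG (by norm_num : (-1:ℝ) < 0) (m : ℂ),
        BernNec.horiz_periodic g m (-1) ℓR, BernNec.vert_eq_circle g m, hOval, smul_eq_mul]
      ring
    have hFm : -(2 * (Real.pi : ℂ) * Complex.I)⁻¹ * BernNec.PB g β ℓR (-1) (m : ℂ)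
        = (-1 : ℂ) ^ m * a m := by
      rw [hPm, pow_succ]
      field_simp
    show a m = (-1 : ℂ) ^ m * (-(2 * (Real.pi : ℂ) * Complex.I)⁻¹
      * BernNec.PB g β ℓR (-1) (m : ℂ))
    rw [hFm, ← mul_assoc, ← mul_pow]
    norm_num
  · -- growth
    intro θ hθ ε hε
    set ℓ : ℝ := -(ε / 2) with hℓdef
    have hℓneg : ℓ < 0 := by rw [hℓdef]; linarith
    obtain ⟨M1, hM1⟩ := BernNec.exists_bound_vert hgdiff ℓR 0 β hG.memVR1
    obtain ⟨M2, hM2⟩ := BernNec.exists_bound_horiz hgdiff β ℓ ℓR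
      (hG.memHβ (by linarith) le_rfl)
    obtain ⟨M3, hM3⟩ := BernNec.exists_bound_vert hgdiff ℓ β (2 * Real.pi - β)
      (hG.memVℓ hℓneg _ _)
    obtain ⟨M4, hM4⟩ := BernNec.exists_bound_horiz hgdiff (2 * Real.pi - β) ℓ ℓR
      (hG.memH2πβ (by linarith) le_rfl)
    obtain ⟨M5, hM5⟩ := BernNec.exists_bound_vert hgdiff ℓR (2 * Real.pi - β) (2 * Real.pi)
      hG.memVR2
    set q : ℝ := Real.pi * b * |Real.sin θ| + ε / 2 with hqdef
    have hq' : q = (Real.pi - β) * |Real.sin θ| + ε / 2 := by rw [hqdef, hπb]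
    have hsin0 : 0 ≤ Real.pi * b * |Real.sin θ| :=
      mul_nonneg (mul_nonneg hπ.le hbpos.le) (abs_nonneg _)
    have hqpos : 0 < q := by rw [hqdef]; linarith
    have hθ4 : |θ| ≤ Real.pi / 4 := le_of_lt (lt_of_lt_of_le hθ (min_le_left _ _))
    have hθR : |θ| ≤ ℓR / (2 * Real.pi) := le_of_lt (lt_of_lt_of_le hθ (min_le_right _ _))
    have hcos : 1 / 2 ≤ Real.cos θ := by
      rw [← Real.cos_abs]
      calc (1 / 2 : ℝ) = Real.cos (Real.pi / 3) := (Real.cos_pi_div_three).symm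
        _ ≤ Real.cos |θ| := Real.cos_le_cos_of_nonneg_of_le_pi (abs_nonneg θ)
            (by linarith) (by linarith)
    have hcos1 : Real.cos θ ≤ 1 := Real.cos_le_one θ
    have hsinθ : |Real.sin θ| ≤ |θ| := Real.abs_sin_le_abs
    have hsinπ : |Real.sin θ| * Real.pi ≤ ℓR / 2 := by
      calc |Real.sin θ| * Real.pi ≤ (ℓR / (2 * Real.pi)) * Real.pi :=
            mul_le_mul_of_nonneg_right (hsinθ.trans hθR) hπ.le
        _ = ℓR / 2 := by field_simp
    set C0 : ℝ := M1 * |β - 0| + M2 * |ℓR - ℓ| + M3 * |2 * Real.pi - β - β|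
      + M4 * |ℓR - ℓ| + M5 * |2 * Real.pi - (2 * Real.pi - β)| with hC0def
    set C1 : ℝ := max C0 1 with hC1def
    have hC1one : (1:ℝ) ≤ C1 := le_max_right _ _
    filter_upwards [Filter.eventually_ge_atTop (max 1 (2 * Real.log C1 / ε))] with t ht
    have ht1 : (1:ℝ) ≤ t := le_trans (le_max_left _ _) ht
    have htlog : 2 * Real.log C1 / ε ≤ t := le_trans (le_max_right _ _) ht
    have ht0 : (0:ℝ) < t := by linarith
    set zt : ℂ := (t : ℂ) * Complex.exp ((θ : ℂ) * Complex.I) with hztdef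
    have hexpθ : Complex.exp ((θ : ℂ) * Complex.I)
        = ((Real.cos θ : ℝ) : ℂ) + ((Real.sin θ : ℝ) : ℂ) * Complex.I := by
      rw [Complex.exp_mul_I, ← Complex.ofReal_cos, ← Complex.ofReal_sin]
    have hztval : zt = ((t * Real.cos θ : ℝ) : ℂ) + ((t * Real.sin θ : ℝ) : ℂ) * Complex.I := by
      rw [hztdef, hexpθ]; push_cast; ring
    have hre : zt.re = t * Real.cos θ := by
      rw [hztval]
      simp only [Complex.add_re, Complex.ofReal_re, Complex.mul_re, Complex.ofReal_im,
        Complex.I_re, Complex.I_im]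
      ring
    have him : zt.im = t * Real.sin θ := by
      rw [hztval]
      simp only [Complex.add_im, Complex.ofReal_im, Complex.mul_im, Complex.ofReal_re,
        Complex.I_re, Complex.I_im]
      ring
    -- exponent bounds for the five pieces
    have hsin1 : ∀ ψ : ℝ, 0 ≤ ψ → ψ ≤ 2 * Real.pi →
        Real.sin θ * (ψ - Real.pi) ≤ |Real.sin θ| * Real.pi := by
      intro ψ h1 h2
      calc Real.sin θ * (ψ - Real.pi) ≤ |Real.sin θ * (ψ - Real.pi)| := le_abs_self _
        _ = |Real.sin θ| * |ψ - Real.pi| := abs_mul _ _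
        _ ≤ |Real.sin θ| * Real.pi := by
            refine mul_le_mul_of_nonneg_left ?_ (abs_nonneg _)
            rw [abs_le]; constructor <;> linarith
    have hsin2 : ∀ ψ : ℝ, β ≤ ψ → ψ ≤ 2 * Real.pi - β →
        Real.sin θ * (ψ - Real.pi) ≤ |Real.sin θ| * (Real.pi - β) := by
      intro ψ h1 h2
      calc Real.sin θ * (ψ - Real.pi) ≤ |Real.sin θ * (ψ - Real.pi)| := le_abs_self _
        _ = |Real.sin θ| * |ψ - Real.pi| := abs_mul _ _
        _ ≤ |Real.sin θ| * (Real.pi - β) := by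
            refine mul_le_mul_of_nonneg_left ?_ (abs_nonneg _)
            rw [abs_le]; constructor <;> linarith
    have hRpiece : ∀ ψ : ℝ, 0 ≤ ψ → ψ ≤ 2 * Real.pi →
        -(zt.re * ℓR) + zt.im * (ψ - Real.pi) ≤ t * q := by
      intro ψ h1 h2
      rw [hre, him]
      have ha := mul_le_mul_of_nonneg_left (hsin1 ψ h1 h2) ht0.le
      have hb : t * (|Real.sin θ| * Real.pi) ≤ t * (Real.cos θ * ℓR) := by
        refine mul_le_mul_of_nonneg_left ?_ ht0.le
        nlinarith
      have hc : 0 ≤ t * q := mul_nonneg ht0.le hqpos.le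
      nlinarith [ha, hb, hc]
    have hXpiece : ∀ x : ℝ, ℓ ≤ x →
        -(zt.re * x) ≤ t * (ε / 2) := by
      intro x hx
      rw [hre]
      rcases le_or_gt 0 x with h | h
      · have h1 : 0 ≤ t * Real.cos θ * x :=
          mul_nonneg (mul_nonneg ht0.le (by linarith)) h
        have h2 : 0 ≤ t * (ε / 2) := mul_nonneg ht0.le (by linarith)
        linarith
      · have h1 : Real.cos θ * (-x) ≤ 1 * (-x) :=
          mul_le_mul_of_nonneg_right hcos1 (by linarith)
        have h2 : -x ≤ ε / 2 := by rw [hℓdef] at hx; linarith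
        have h3 : t * (Real.cos θ * (-x)) ≤ t * (ε / 2) := by
          refine mul_le_mul_of_nonneg_left ?_ ht0.le
          linarith
        nlinarith
    have hE1 : ∀ ψ ∈ Set.uIcc (0:ℝ) β,
        -(zt.re * ℓR) + zt.im * (ψ - Real.pi) ≤ t * q := by
      intro ψ hψ
      rw [Set.uIcc_of_le hβpos.le] at hψ
      exact hRpiece ψ hψ.1 (by linarith [hψ.2])
    have hE5 : ∀ ψ ∈ Set.uIcc (2 * Real.pi - β) (2 * Real.pi),
        -(zt.re * ℓR) + zt.im * (ψ - Real.pi) ≤ t * q := by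
      intro ψ hψ
      rw [Set.uIcc_of_le (by linarith : 2 * Real.pi - β ≤ 2 * Real.pi)] at hψ
      exact hRpiece ψ (by linarith [hψ.1]) hψ.2
    have hE3 : ∀ ψ ∈ Set.uIcc β (2 * Real.pi - β),
        -(zt.re * ℓ) + zt.im * (ψ - Real.pi) ≤ t * q := by
      intro ψ hψ
      rw [Set.uIcc_of_le (by linarith : β ≤ 2 * Real.pi - β)] at hψ
      have h1 := mul_le_mul_of_nonneg_left (hsin2 ψ hψ.1 hψ.2) ht0.le
      have h2 := hXpiece ℓ le_rfl
      rw [him, hq']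
      rw [hre] at h2
      nlinarith
    have hE2 : ∀ x ∈ Set.uIcc ℓ ℓR,
        -(zt.re * x) + zt.im * (β - Real.pi) ≤ t * q := by
      intro x hx
      rw [Set.uIcc_of_le (by linarith : ℓ ≤ ℓR)] at hx
      have h1 := mul_le_mul_of_nonneg_left (hsin2 β le_rfl (by linarith)) ht0.le
      have h2 := hXpiece x hx.1
      rw [him, hq']
      rw [hre] at h2 ⊢
      nlinarith
    have hE4 : ∀ x ∈ Set.uIcc ℓ ℓR,
        -(zt.re * x) + zt.im * (2 * Real.pi - β - Real.pi) ≤ t * q := by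
      intro x hx
      rw [Set.uIcc_of_le (by linarith : ℓ ≤ ℓR)] at hx
      have h1 := mul_le_mul_of_nonneg_left
        (hsin2 (2 * Real.pi - β) (by linarith) le_rfl) ht0.le
      have h2 := hXpiece x hx.1
      rw [him, hq']
      rw [hre] at h2 ⊢
      nlinarith
    have hB1 := BernNec.vert_norm_le g ℓR 0 β zt hM1 hE1
    have hB2 := BernNec.horiz_norm_le g β ℓ ℓR zt hM2 hE2
    have hB3 := BernNec.vert_norm_le g ℓ β (2 * Real.pi - β) zt hM3 hE3
    have hB4 := BernNec.horiz_norm_le g (2 * Real.pi - β) ℓ ℓR zt hM4 hE4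
    have hB5 := BernNec.vert_norm_le g ℓR (2 * Real.pi - β) (2 * Real.pi) zt hM5 hE5
    have hPBbound : ‖BernNec.PB g β ℓR ℓ zt‖ ≤ C0 * Real.exp (t * q) := by
      have htri : ‖BernNec.PB g β ℓR ℓ zt‖ ≤
          ‖BernNec.VertB g ℓR 0 β zt‖ + ‖BernNec.HorizB g β ℓ ℓR zt‖
          + ‖BernNec.VertB g ℓ β (2 * Real.pi - β) zt‖
          + ‖BernNec.HorizB g (2 * Real.pi - β) ℓ ℓR zt‖
          + ‖BernNec.VertB g ℓR (2 * Real.pi - β) (2 * Real.pi) zt‖ := by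
        rw [BernNec.PB]
        refine le_trans (norm_add_le _ _) ?_
        have s1 := norm_add_le (BernNec.VertB g ℓR 0 β zt - BernNec.HorizB g β ℓ ℓR zt
          + BernNec.VertB g ℓ β (2 * Real.pi - β) zt)
          (BernNec.HorizB g (2 * Real.pi - β) ℓ ℓR zt)
        have s2 := norm_add_le (BernNec.VertB g ℓR 0 β zt - BernNec.HorizB g β ℓ ℓR zt)
          (BernNec.VertB g ℓ β (2 * Real.pi - β) zt)
        have s3 := norm_sub_le (BernNec.VertB g ℓR 0 β zt) (BernNec.HorizB g β ℓ ℓR zt)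
        linarith
      rw [hC0def]
      linarith
    have hinv : ‖-(2 * (Real.pi : ℂ) * Complex.I)⁻¹‖ ≤ 1 := by
      rw [norm_neg, norm_inv]
      have h2 : ‖2 * (Real.pi : ℂ) * Complex.I‖ = 2 * Real.pi := by
        simp [Complex.norm_I, Complex.norm_real,
          _root_.abs_of_nonneg hπ.le]
      rw [h2]
      rw [inv_le_one_iff₀]
      right; linarith [Real.pi_gt_three]
    have hFbound : ‖-(2 * (Real.pi : ℂ) * Complex.I)⁻¹ * BernNec.PB g β ℓR (-1) zt‖
        ≤ C1 * Real.exp (t * q) := by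
      rw [BernNec.P_indep hgdiff hG (by norm_num : (-1:ℝ) < 0) hℓneg zt, norm_mul]
      calc ‖-(2 * (Real.pi : ℂ) * Complex.I)⁻¹‖ * ‖BernNec.PB g β ℓR ℓ zt‖
          ≤ 1 * ‖BernNec.PB g β ℓR ℓ zt‖ :=
            mul_le_mul_of_nonneg_right hinv (norm_nonneg _)
        _ = ‖BernNec.PB g β ℓR ℓ zt‖ := one_mul _
        _ ≤ C0 * Real.exp (t * q) := hPBbound
        _ ≤ C1 * Real.exp (t * q) :=
            mul_le_mul_of_nonneg_right (le_max_left _ _) (Real.exp_pos _).le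
    show Real.log ‖-(2 * (Real.pi : ℂ) * Complex.I)⁻¹ * BernNec.PB g β ℓR (-1) zt‖ / t
      ≤ Real.pi * b * |Real.sin θ| + ε
    rcases eq_or_lt_of_le (norm_nonneg
        (-(2 * (Real.pi : ℂ) * Complex.I)⁻¹ * BernNec.PB g β ℓR (-1) zt)) with h0 | h0
    · rw [← h0, Real.log_zero, zero_div]
      linarith
    · have hlog : Real.log ‖-(2 * (Real.pi : ℂ) * Complex.I)⁻¹
          * BernNec.PB g β ℓR (-1) zt‖ ≤ Real.log C1 + t * q := by
        calc Real.log ‖-(2 * (Real.pi : ℂ) * Complex.I)⁻¹ * BernNec.PB g β ℓR (-1) zt‖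
            ≤ Real.log (C1 * Real.exp (t * q)) := Real.log_le_log h0 hFbound
          _ = Real.log C1 + t * q := by
              rw [Real.log_mul (by linarith : C1 ≠ 0) (Real.exp_ne_zero _), Real.log_exp]
      have hlogC1 : Real.log C1 ≤ t * (ε / 2) := by
        have h1 := (div_le_iff₀ hε).1 htlog
        linarith
      rw [div_le_iff₀ ht0]
      have hqexp : t * q = t * (Real.pi * b * |Real.sin θ|) + t * (ε / 2) := by
        rw [hqdef]; ring
      nlinarith
end
end

section
/- Let (a_0, a_1, …, a_N) be a finite sequence of real numbers and let f be a real analytic function on the closed interval [0, N], not identically zero, such that f(n) = (−1)^n a_n for n = 0, 1, …, N. Then the number of zeros of f on [0, N], counted with multiplicities (the multiplicity of a zero x being the order of vanishing of f at x), is at least N minus the number of sign changes of the sequence (a_0, …, a_N). -/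
open Filter MeasureTheory Set Topology

noncomputable section

/-- derivative of an analytic function is analytic at a point -/
lemma analyticAt_deriv {g : ℝ → ℝ} {x : ℝ} (hg : AnalyticAt ℝ g x) :
    AnalyticAt ℝ (deriv g) x := by
  obtain ⟨s, hs_mem, hs⟩ := hg.eventually_analyticAt.exists_mem
  obtain ⟨t, hts, ht_open, hxt⟩ := mem_nhds_iff.mp hs_mem
  exact (AnalyticOnNhd.deriv (fun y hy => hs y (hts hy))) x hxt

/-- iterated derivatives of `(y - x)^d * g y` at `x` -/
lemma ordAux : ∀ (d : ℕ) (f g : ℝ → ℝ) (x : ℝ), AnalyticAt ℝ g x →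
    (∀ᶠ y in 𝓝 x, f y = (y - x) ^ d * g y) →
    (∀ k < d, iteratedDeriv k f x = 0) ∧
      iteratedDeriv d f x = (d.factorial : ℝ) * g x := by
  intro d
  induction d with
  | zero =>
    intro f g x _ heq
    refine ⟨fun k hk => absurd hk (by omega), ?_⟩
    simpa using heq.self_of_nhds
  | succ d ih =>
    intro f g x hg heq
    set g1 : ℝ → ℝ := fun y => (d + 1 : ℝ) * g y + (y - x) * deriv g y with hg1def
    have hg1 : AnalyticAt ℝ g1 x := by
      exact ((analyticAt_const (v := ((d : ℝ) + 1))).mul hg).add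
        (((analyticAt_id.sub analyticAt_const)).mul (analyticAt_deriv hg))
    have hderiv : ∀ᶠ y in 𝓝 x, deriv f y = (y - x) ^ d * g1 y := by
      filter_upwards [heq.eventually_nhds, hg.eventually_analyticAt] with y hy hgy
      have h1 : deriv f y = deriv (fun z => (z - x) ^ (d + 1) * g z) y :=
        Filter.EventuallyEq.deriv_eq hy
      have h2 : HasDerivAt (fun z => (z - x) ^ (d + 1) * g z)
          (((d + 1 : ℕ) : ℝ) * (y - x) ^ d * g y + (y - x) ^ (d + 1) * deriv g y) y := by
        have hp : HasDerivAt (fun z : ℝ => (z - x) ^ (d + 1))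
            (((d + 1 : ℕ) : ℝ) * (y - x) ^ d) y := by
          simpa using ((hasDerivAt_id y).sub_const x).fun_pow (d + 1)
        exact hp.mul hgy.differentiableAt.hasDerivAt
      rw [h1, h2.deriv, hg1def]
      push_cast
      ring
    obtain ⟨h0, hd⟩ := ih (deriv f) g1 x hg1 hderiv
    constructor
    · intro k hk
      match k with
      | 0 =>
        simpa using (by simpa using heq.self_of_nhds : f x = 0)
      | (j + 1) =>
        rw [iteratedDeriv_succ']
        exact h0 j (by omega)
    · rw [iteratedDeriv_succ', hd, hg1def]
      simp only [sub_self, zero_mul, add_zero]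
      rw [Nat.factorial_succ]
      push_cast
      ring

lemma vanishOrder_eq_of_factor {f g : ℝ → ℝ} {x : ℝ} {d : ℕ} (hg : AnalyticAt ℝ g x)
    (hgx : g x ≠ 0) (heq : ∀ᶠ y in 𝓝 x, f y = (y - x) ^ d * g y) : vanishOrder f x = d := by
  obtain ⟨h0, hd⟩ := ordAux d f g x hg heq
  have hdmem : d ∈ {k : ℕ | iteratedDeriv k f x ≠ 0} := by
    simp only [Set.mem_setOf_eq, hd]
    exact mul_ne_zero (Nat.cast_ne_zero.mpr d.factorial_ne_zero) hgx
  refine le_antisymm (Nat.sInf_le hdmem) (le_of_not_gt fun hlt => ?_)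
  have hmem := Nat.sInf_mem (⟨d, hdmem⟩ : {k : ℕ | iteratedDeriv k f x ≠ 0}.Nonempty)
  exact hmem (h0 _ hlt)

/-- local sign behavior around a point with factorization -/
lemma signLocal {f g : ℝ → ℝ} {x : ℝ} {d : ℕ} (hg : AnalyticAt ℝ g x) (hgx : g x ≠ 0)
    (heq : ∀ᶠ y in 𝓝 x, f y = (y - x) ^ d * g y) :
    ∃ ε > 0, (∀ y, y ≠ x → |y - x| < ε → f y ≠ 0) ∧
      ∀ u v, x - ε < u → u < x → x < v → v < x + ε → 0 < (-1 : ℝ) ^ d * (f u * f v) := by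
  have hpos : ∀ᶠ y in 𝓝 x, 0 < g y * g x := by
    have hc : ContinuousAt (fun y => g y * g x) x := hg.continuousAt.mul continuousAt_const
    exact hc.eventually_mem (eventually_gt_nhds (mul_self_pos.mpr hgx))
  obtain ⟨ε, hε, hall⟩ := Metric.eventually_nhds_iff.mp (hpos.and heq)
  refine ⟨ε, hε, ?_, ?_⟩
  · intro y hy hlt
    obtain ⟨h1, h2⟩ := hall (show dist y x < ε by rwa [Real.dist_eq])
    rw [h2]
    exact mul_ne_zero (pow_ne_zero _ (sub_ne_zero.mpr hy)) (fun h => by simp [h] at h1)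
  · intro u v hu1 hu2 hv1 hv2
    obtain ⟨hgu, hfu⟩ := hall (y := u) (by rw [Real.dist_eq, abs_of_neg (by linarith)]; linarith)
    obtain ⟨hgv, hfv⟩ := hall (y := v) (by rw [Real.dist_eq, abs_of_pos (by linarith)]; linarith)
    have hguv : 0 < g u * g v := by nlinarith [mul_pos hgu hgv, mul_self_pos.mpr hgx]
    have h1 : ((-1 : ℝ)) ^ d * (u - x) ^ d = (x - u) ^ d := by
      rw [← mul_pow]; congr 1; ring
    have key : (-1 : ℝ) ^ d * (f u * f v) = ((x - u) ^ d * (v - x) ^ d) * (g u * g v) := by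
      rw [hfu, hfv, ← h1]; ring
    rw [key]
    exact mul_pos (mul_pos (pow_pos (by linarith) d) (pow_pos (by linarith) d)) hguv


/-- Lemma 1 of the paper. -/
theorem zeros_vs_sign_changes (N : ℕ) (a : ℕ → ℝ) (f : ℝ → ℝ)
    (hf : ∀ x ∈ Set.Icc (0 : ℝ) (N : ℝ), AnalyticAt ℝ f x)
    (hne : ∃ x ∈ Set.Icc (0 : ℝ) (N : ℝ), f x ≠ 0)
    (hval : ∀ k : ℕ, k ≤ N → f (k : ℝ) = (-1 : ℝ) ^ k * a k) :
    ∃ Z : Finset ℝ, (↑Z = {x ∈ Set.Icc (0 : ℝ) (N : ℝ) | f x = 0}) ∧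
      N ≤ (∑ x ∈ Z, vanishOrder f x) + signChangesUpTo a N := by
  classical
  have NEZ : ∀ x ∈ Set.Icc (0 : ℝ) (N : ℝ), ¬ (∀ᶠ y in 𝓝 x, f y = 0) := by
    intro x hx hev
    obtain ⟨x0, hx0, hfx0⟩ := hne
    exact hfx0 (AnalyticOnNhd.eqOn_zero_of_preconnected_of_eventuallyEq_zero
      (fun y hy => hf y hy) isPreconnected_Icc hx (hev.mono fun y hy => by simpa using hy) hx0)
  have FACT : ∀ x ∈ Set.Icc (0 : ℝ) (N : ℝ), ∃ d : ℕ, ∃ g : ℝ → ℝ, AnalyticAt ℝ g x ∧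
      g x ≠ 0 ∧ (∀ᶠ y in 𝓝 x, f y = (y - x) ^ d * g y) ∧ vanishOrder f x = d := by
    intro x hx
    obtain ⟨d, g, hg, hgx, heq⟩ :=
      ((hf x hx).exists_eventuallyEq_pow_smul_nonzero_iff).mpr (NEZ x hx)
    have heq' : ∀ᶠ y in 𝓝 x, f y = (y - x) ^ d * g y := by
      simpa [smul_eq_mul] using heq
    exact ⟨d, g, hg, hgx, heq', vanishOrder_eq_of_factor hg hgx heq'⟩
  -- finiteness of the zero set
  have ZFIN : {x ∈ Set.Icc (0 : ℝ) (N : ℝ) | f x = 0}.Finite := by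
    have hU : ∀ x ∈ Set.Icc (0 : ℝ) (N : ℝ), {y : ℝ | f y = 0 → y = x} ∈ 𝓝 x := by
      intro x hx
      rcases (hf x hx).eventually_eq_zero_or_eventually_ne_zero with h | h
      · exact absurd h (NEZ x hx)
      · have h' := eventually_nhdsWithin_iff.mp h
        filter_upwards [h'] with y hy hfy
        by_contra hyx
        exact hy (by simpa using hyx) hfy
    obtain ⟨t, _, ht⟩ := isCompact_Icc.elim_nhds_subcover _ hU
    refine Set.Finite.subset t.finite_toSet ?_
    rintro y ⟨hy1, hy2⟩
    obtain ⟨x, hxt, hyx⟩ := Set.mem_iUnion₂.mp (ht hy1)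
    have : y = x := hyx hy2
    rw [this]
    exact hxt
  set Z : Finset ℝ := ZFIN.toFinset with hZdef
  have hZ : (↑Z : Set ℝ) = {x ∈ Set.Icc (0 : ℝ) (N : ℝ) | f x = 0} := ZFIN.coe_toFinset
  have memZ : ∀ x : ℝ, x ∈ Z ↔ x ∈ Set.Icc (0 : ℝ) (N : ℝ) ∧ f x = 0 := by
    intro x
    rw [← Finset.mem_coe, hZ]
    exact Set.mem_sep_iff
  -- no-zero interval: same sign
  have SAME : ∀ u v : ℝ, u ∈ Set.Icc (0 : ℝ) (N : ℝ) → v ∈ Set.Icc (0 : ℝ) (N : ℝ) → u < v →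
      f u ≠ 0 → f v ≠ 0 → (∀ z, u < z → z < v → f z ≠ 0) → 0 < f u * f v := by
    intro u v hu hv huv hfu hfv hnz
    have hsub : Set.Icc u v ⊆ Set.Icc (0 : ℝ) (N : ℝ) := Set.Icc_subset_Icc hu.1 hv.2
    have hcont : ContinuousOn f (Set.Icc u v) := fun z hz =>
      ((hf z (hsub hz)).continuousAt).continuousWithinAt
    by_contra h
    push_neg at h
    have hne0 : f u * f v ≠ 0 := mul_ne_zero hfu hfv
    have hlt : f u * f v < 0 := lt_of_le_of_ne h hne0
    have h0mem : (0 : ℝ) ∈ Set.uIcc (f u) (f v) := by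
      rcases mul_neg_iff.mp hlt with ⟨h1, h2⟩ | ⟨h1, h2⟩
      · exact Set.mem_uIcc.mpr (Or.inr ⟨le_of_lt h2, le_of_lt h1⟩)
      · exact Set.mem_uIcc.mpr (Or.inl ⟨le_of_lt h1, le_of_lt h2⟩)
    have hcont' : ContinuousOn f (Set.uIcc u v) := by
      rwa [Set.uIcc_of_le (le_of_lt huv)]
    obtain ⟨z, hz, hz0⟩ := intermediate_value_uIcc hcont' h0mem
    rw [Set.uIcc_of_le (le_of_lt huv)] at hz
    have hzu : z ≠ u := fun h => hfu (h ▸ hz0)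
    have hzv : z ≠ v := fun h => hfv (h ▸ hz0)
    exact hnz z (lt_of_le_of_ne hz.1 (Ne.symm hzu)) (lt_of_le_of_ne hz.2 hzv) hz0
  -- parity lemma
  have PAR : ∀ n : ℕ, ∀ u v : ℝ, u ∈ Set.Icc (0 : ℝ) (N : ℝ) → v ∈ Set.Icc (0 : ℝ) (N : ℝ) →
      u < v → f u ≠ 0 → f v ≠ 0 → (Z.filter fun x => u < x ∧ x < v).card ≤ n →
      0 < f u * f v * (-1 : ℝ) ^ (∑ x ∈ Z.filter (fun x => u < x ∧ x < v), vanishOrder f x) := by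
    intro n
    induction n with
    | zero =>
      intro u v hu hv huv hfu hfv hcard
      have hemp : Z.filter (fun x => u < x ∧ x < v) = ∅ := Finset.card_eq_zero.mp (by omega)
      rw [hemp]
      simp only [Finset.sum_empty, pow_zero, mul_one]
      refine SAME u v hu hv huv hfu hfv (fun z h1 h2 hz0 => ?_)
      have hzI : z ∈ Set.Icc (0 : ℝ) (N : ℝ) := ⟨le_trans hu.1 (le_of_lt h1), le_trans (le_of_lt h2) hv.2⟩
      have : z ∈ Z.filter (fun x => u < x ∧ x < v) :=
        Finset.mem_filter.mpr ⟨(memZ z).mpr ⟨hzI, hz0⟩, h1, h2⟩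
      rw [hemp] at this
      exact absurd this (Finset.notMem_empty z)
    | succ n IH =>
      intro u v hu hv huv hfu hfv hcard
      by_cases hF : (Z.filter fun x => u < x ∧ x < v).Nonempty
      case neg =>
        rw [Finset.not_nonempty_iff_eq_empty] at hF
        rw [hF]
        simp only [Finset.sum_empty, pow_zero, mul_one]
        refine SAME u v hu hv huv hfu hfv (fun z h1 h2 hz0 => ?_)
        have hzI : z ∈ Set.Icc (0 : ℝ) (N : ℝ) :=
          ⟨le_trans hu.1 (le_of_lt h1), le_trans (le_of_lt h2) hv.2⟩
        have : z ∈ Z.filter (fun x => u < x ∧ x < v) :=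
          Finset.mem_filter.mpr ⟨(memZ z).mpr ⟨hzI, hz0⟩, h1, h2⟩
        rw [hF] at this
        exact absurd this (Finset.notMem_empty z)
      case pos =>
        set x := (Z.filter fun x => u < x ∧ x < v).max' hF with hxdef
        have hxF : x ∈ Z.filter (fun x => u < x ∧ x < v) := Finset.max'_mem _ hF
        obtain ⟨hxZ, hux, hxv⟩ := Finset.mem_filter.mp hxF
        obtain ⟨hxI, hfx⟩ := (memZ x).mp hxZ
        obtain ⟨d, g, hg, hgx, heq, hvo⟩ := FACT x hxI
        obtain ⟨ε, hε, hne0, hsgn⟩ := signLocal hg hgx heq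
        obtain ⟨q, hqdef⟩ : ∃ q : ℝ, q = x - min ε (x - u) / 2 := ⟨_, rfl⟩
        obtain ⟨p, hpdef⟩ : ∃ p : ℝ, p = x + min ε (v - x) / 2 := ⟨_, rfl⟩
        have hδu : 0 < min ε (x - u) := lt_min hε (by linarith)
        have hδv : 0 < min ε (v - x) := lt_min hε (by linarith)
        have hδuε : min ε (x - u) ≤ ε := min_le_left _ _
        have hδuu : min ε (x - u) ≤ x - u := min_le_right _ _
        have hδvε : min ε (v - x) ≤ ε := min_le_left _ _
        have hδvv : min ε (v - x) ≤ v - x := min_le_right _ _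
        have huq : u < q := by rw [hqdef]; linarith
        have hqx : q < x := by rw [hqdef]; linarith
        have hxp : x < p := by rw [hpdef]; linarith
        have hpv : p < v := by rw [hpdef]; linarith
        have hqI : q ∈ Set.Icc (0 : ℝ) (N : ℝ) := ⟨le_trans hu.1 (le_of_lt huq), le_trans (le_of_lt (lt_trans hqx hxv)) hv.2⟩
        have hpI : p ∈ Set.Icc (0 : ℝ) (N : ℝ) := ⟨le_trans hxI.1 (le_of_lt hxp), le_trans (le_of_lt hpv) hv.2⟩
        have hqabs : |q - x| < ε := by rw [abs_of_neg (by linarith)]; rw [hqdef]; linarith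
        have hpabs : |p - x| < ε := by rw [abs_of_pos (by linarith)]; rw [hpdef]; linarith
        have hfq : f q ≠ 0 := hne0 q (ne_of_lt hqx) hqabs
        have hfp : f p ≠ 0 := hne0 p (ne_of_gt hxp) hpabs
        have hqp : 0 < (-1 : ℝ) ^ d * (f q * f p) :=
          hsgn q p (by rw [hqdef]; linarith) hqx hxp (by rw [hpdef]; linarith)
        have hfpv : 0 < f p * f v := by
          refine SAME p v hpI hv hpv hfp hfv (fun z h1 h2 hz0 => ?_)
          have hzI : z ∈ Set.Icc (0 : ℝ) (N : ℝ) :=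
            ⟨le_trans hpI.1 (le_of_lt h1), le_trans (le_of_lt h2) hv.2⟩
          have hzF : z ∈ Z.filter (fun x => u < x ∧ x < v) :=
            Finset.mem_filter.mpr ⟨(memZ z).mpr ⟨hzI, hz0⟩, lt_trans (lt_trans hux hxp) h1, h2⟩
          have : z ≤ x := Finset.le_max' _ z hzF
          linarith [lt_trans hxp h1]
        have hsplit : Z.filter (fun y => u < y ∧ y < v)
            = insert x (Z.filter fun y => u < y ∧ y < q) := by
          ext z
          simp only [Finset.mem_insert, Finset.mem_filter]
          constructor
          · rintro ⟨hzZ, hz1, hz2⟩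
            by_cases hzx : z = x
            · exact Or.inl hzx
            refine Or.inr ⟨hzZ, hz1, ?_⟩
            have hzle : z ≤ x := Finset.le_max' _ z (Finset.mem_filter.mpr ⟨hzZ, hz1, hz2⟩)
            have hzlt : z < x := lt_of_le_of_ne hzle hzx
            by_contra hzq
            push_neg at hzq
            have habs : |z - x| < ε := by
              rw [abs_of_neg (by linarith)]
              rw [hqdef] at hzq
              linarith
            exact hne0 z hzx habs ((memZ z).mp hzZ).2
          · rintro (rfl | ⟨hzZ, hz1, hz2⟩)
            · exact ⟨hxZ, hux, hxv⟩
            · exact ⟨hzZ, hz1, lt_trans hz2 (lt_trans hqx hxv)⟩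
        have hxnot : x ∉ Z.filter (fun y => u < y ∧ y < q) := by
          intro h
          exact absurd (Finset.mem_filter.mp h).2.2 (not_lt.mpr (le_of_lt hqx))
        have hcard' : (Z.filter fun y => u < y ∧ y < q).card ≤ n := by
          have hsub : (Z.filter fun y => u < y ∧ y < q)
              ⊆ (Z.filter fun y => u < y ∧ y < v).erase x := by
            intro z hz
            obtain ⟨hzZ, hz1, hz2⟩ := Finset.mem_filter.mp hz
            refine Finset.mem_erase.mpr ⟨ne_of_lt (lt_trans hz2 hqx), ?_⟩
            exact Finset.mem_filter.mpr ⟨hzZ, hz1, lt_trans hz2 (lt_trans hqx hxv)⟩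
          have h1 := Finset.card_le_card hsub
          have h2 := Finset.card_erase_of_mem hxF
          omega
        have hIH := IH u q hu hqI huq hfu hfq hcard'
        rw [hsplit, Finset.sum_insert hxnot, hvo, pow_add]
        nlinarith [mul_pos (mul_pos hIH hqp) hfpv, sq_nonneg (f q * f p), sq_nonneg (f q), sq_nonneg (f p)]
  -- each integer with vanishing coefficient is a zero of positive order
  have ordpos : ∀ j : ℕ, j ≤ N → a j = 0 →
      ((j : ℝ) ∈ Z ∧ 1 ≤ vanishOrder f ((j : ℕ) : ℝ)) := by
    intro j hj haj
    have hjI : ((j : ℕ) : ℝ) ∈ Set.Icc (0 : ℝ) (N : ℝ) :=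
      ⟨Nat.cast_nonneg j, Nat.cast_le.mpr hj⟩
    have hfj : f ((j : ℕ) : ℝ) = 0 := by rw [hval j hj, haj, mul_zero]
    refine ⟨(memZ _).mpr ⟨hjI, hfj⟩, ?_⟩
    obtain ⟨d, g, hg, hgx, heq, hvo⟩ := FACT _ hjI
    rw [hvo]
    rcases Nat.eq_zero_or_pos d with rfl | hd
    · exfalso
      have := heq.self_of_nhds
      simp only [sub_self, pow_zero, one_mul] at this
      exact hgx (this ▸ hfj)
    · exact hd
  have Scfin : ∀ m : ℕ, {j : ℕ | j ≤ m ∧ SignChangeAt a j}.Finite := fun m =>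
    (Set.finite_Iic m).subset (fun j hj => hj.1)
  have Scmono : ∀ k m : ℕ, k ≤ m →
      Set.ncard {j : ℕ | j ≤ k ∧ SignChangeAt a j} ≤ Set.ncard {j : ℕ | j ≤ m ∧ SignChangeAt a j} :=
    fun k m hkm => Set.ncard_le_ncard (fun j hj => ⟨le_trans hj.1 hkm, hj.2⟩) (Scfin m)
  -- main induction
  have KEY : ∀ m : ℕ, m ≤ N →
      m ≤ (∑ x ∈ Z.filter (fun x => x ≤ (m : ℝ)), vanishOrder f x)
        + Set.ncard {j : ℕ | j ≤ m ∧ SignChangeAt a j} := by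
    intro m
    induction m using Nat.strong_induction_on with
    | _ m IH =>
    match m with
    | 0 => exact fun _ => Nat.zero_le _
    | (m + 1) =>
      intro hmN
      by_cases ha : a (m + 1) = 0
      · -- new integer zero at m+1
        obtain ⟨hmem, hord⟩ := ordpos (m + 1) hmN ha
        have hins : insert (((m + 1 : ℕ)) : ℝ) (Z.filter fun x => x ≤ (m : ℝ))
            ⊆ Z.filter fun x => x ≤ (((m + 1 : ℕ)) : ℝ) := by
          intro z hz
          rcases Finset.mem_insert.mp hz with rfl | hz
          · exact Finset.mem_filter.mpr ⟨hmem, le_refl _⟩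
          · obtain ⟨h1, h2⟩ := Finset.mem_filter.mp hz
            refine Finset.mem_filter.mpr ⟨h1, ?_⟩
            push_cast
            linarith
        have hnm : (((m + 1 : ℕ)) : ℝ) ∉ Z.filter (fun x => x ≤ (m : ℝ)) := by
          intro h
          have := (Finset.mem_filter.mp h).2
          push_cast at this
          linarith
        have hsum : vanishOrder f (((m + 1 : ℕ)) : ℝ)
            + ∑ x ∈ Z.filter (fun x => x ≤ (m : ℝ)), vanishOrder f x
            ≤ ∑ x ∈ Z.filter (fun x => x ≤ (((m + 1 : ℕ)) : ℝ)), vanishOrder f x := by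
          rw [← Finset.sum_insert hnm]
          exact Finset.sum_le_sum_of_subset (f := vanishOrder f) hins
        have hmono := Scmono m (m + 1) (by omega)
        have hIH := IH m (by omega) (by omega)
        omega
      · -- a (m+1) ≠ 0
        have hfm1 : f (((m + 1 : ℕ)) : ℝ) ≠ 0 := by
          rw [hval (m + 1) hmN]
          exact mul_ne_zero (pow_ne_zero _ (by norm_num)) ha
        by_cases hall : ∀ j ≤ m, a j = 0
        · -- all previous coefficients vanish: m+1 integer zeros
          have hsub : (Finset.range (m + 1)).image (fun j : ℕ => (j : ℝ))
              ⊆ Z.filter (fun x => x ≤ (((m + 1 : ℕ)) : ℝ)) := by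
            intro z hz
            obtain ⟨j, hj, rfl⟩ := Finset.mem_image.mp hz
            have hjm : j ≤ m := by have := Finset.mem_range.mp hj; omega
            obtain ⟨hmem, _⟩ := ordpos j (by omega) (hall j hjm)
            refine Finset.mem_filter.mpr ⟨hmem, ?_⟩
            have : (j : ℝ) ≤ ((m + 1 : ℕ) : ℝ) := Nat.cast_le.mpr (by omega)
            exact this
          have hone : ∀ z ∈ (Finset.range (m + 1)).image (fun j : ℕ => (j : ℝ)),
              1 ≤ vanishOrder f z := by
            intro z hz
            obtain ⟨j, hj, rfl⟩ := Finset.mem_image.mp hz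
            have hjm : j ≤ m := by have := Finset.mem_range.mp hj; omega
            exact (ordpos j (by omega) (hall j hjm)).2
          have hcard : ((Finset.range (m + 1)).image (fun j : ℕ => (j : ℝ))).card = m + 1 := by
            rw [Finset.card_image_of_injective _ Nat.cast_injective, Finset.card_range]
          have h1 : m + 1 ≤ ∑ x ∈ (Finset.range (m + 1)).image (fun j : ℕ => (j : ℝ)),
              vanishOrder f x := by
            have := Finset.card_nsmul_le_sum _ (vanishOrder f) 1 hone
            simpa [hcard] using this
          have h2 := Finset.sum_le_sum_of_subset (f := vanishOrder f) hsub
          omega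
        · -- there is a previous nonzero coefficient
          push_neg at hall
          obtain ⟨j0, hj0m, hj0⟩ := hall
          have hsne : ((Finset.range (m + 1)).filter (fun j => a j ≠ 0)).Nonempty :=
            ⟨j0, Finset.mem_filter.mpr ⟨Finset.mem_range.mpr (by omega), hj0⟩⟩
          set k : ℕ := ((Finset.range (m + 1)).filter (fun j => a j ≠ 0)).max' hsne with hkdef
          have hkmem := Finset.max'_mem _ hsne
          obtain ⟨hkr, hak⟩ := Finset.mem_filter.mp hkmem
          have hkm : k ≤ m := by have := Finset.mem_range.mp hkr; omega
          have hkmax : ∀ j, k < j → j ≤ m → a j = 0 := by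
            intro j h1 h2
            by_contra h
            have : j ≤ k := Finset.le_max' _ j
              (Finset.mem_filter.mpr ⟨Finset.mem_range.mpr (by omega), h⟩)
            omega
          have hfk : f ((k : ℕ) : ℝ) ≠ 0 := by
            rw [hval k (by omega)]
            exact mul_ne_zero (pow_ne_zero _ (by norm_num)) hak
          -- lower bound on multiplicities strictly between k and m+1
          have hWsub : (Finset.Ioc k m).image (fun j : ℕ => (j : ℝ))
              ⊆ Z.filter (fun x => ((k : ℕ) : ℝ) < x ∧ x < (((m + 1 : ℕ)) : ℝ)) := by
            intro z hz
            obtain ⟨j, hj, rfl⟩ := Finset.mem_image.mp hz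
            obtain ⟨hj1, hj2⟩ := Finset.mem_Ioc.mp hj
            obtain ⟨hmem, _⟩ := ordpos j (by omega) (hkmax j hj1 hj2)
            refine Finset.mem_filter.mpr ⟨hmem, ?_, ?_⟩
            · exact_mod_cast hj1
            · exact_mod_cast Nat.lt_succ_of_le hj2
          have hWone : ∀ z ∈ (Finset.Ioc k m).image (fun j : ℕ => (j : ℝ)),
              1 ≤ vanishOrder f z := by
            intro z hz
            obtain ⟨j, hj, rfl⟩ := Finset.mem_image.mp hz
            obtain ⟨hj1, hj2⟩ := Finset.mem_Ioc.mp hj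
            exact (ordpos j (by omega) (hkmax j hj1 hj2)).2
          have hW1 : m - k ≤ ∑ x ∈ Z.filter (fun x => ((k : ℕ) : ℝ) < x
              ∧ x < (((m + 1 : ℕ)) : ℝ)), vanishOrder f x := by
            have hc : ((Finset.Ioc k m).image (fun j : ℕ => (j : ℝ))).card = m - k := by
              rw [Finset.card_image_of_injective _ Nat.cast_injective, Nat.card_Ioc]
            have h1 := Finset.card_nsmul_le_sum _ (vanishOrder f) 1 hWone
            have h2 := Finset.sum_le_sum_of_subset (f := vanishOrder f) hWsub
            simp only [smul_eq_mul, mul_one] at h1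
            rw [hc] at h1
            exact le_trans h1 h2
          -- splitting the zeros up to m+1
          have hdisj : Disjoint (Z.filter fun x => x ≤ ((k : ℕ) : ℝ))
              (Z.filter fun x => ((k : ℕ) : ℝ) < x ∧ x < (((m + 1 : ℕ)) : ℝ)) := by
            rw [Finset.disjoint_left]
            intro z hz1 hz2
            exact absurd (Finset.mem_filter.mp hz2).2.1
              (not_lt.mpr (Finset.mem_filter.mp hz1).2)
          have hunion : (Z.filter fun x => x ≤ ((k : ℕ) : ℝ))
              ∪ (Z.filter fun x => ((k : ℕ) : ℝ) < x ∧ x < (((m + 1 : ℕ)) : ℝ))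
              ⊆ Z.filter (fun x => x ≤ (((m + 1 : ℕ)) : ℝ)) := by
            intro z hz
            rcases Finset.mem_union.mp hz with hz | hz
            · obtain ⟨h1, h2⟩ := Finset.mem_filter.mp hz
              refine Finset.mem_filter.mpr ⟨h1, le_trans h2 ?_⟩
              exact_mod_cast Nat.le_succ_of_le hkm
            · obtain ⟨h1, h2⟩ := Finset.mem_filter.mp hz
              exact Finset.mem_filter.mpr ⟨h1, le_of_lt h2.2⟩
          have hsplit : (∑ x ∈ Z.filter (fun x => x ≤ ((k : ℕ) : ℝ)), vanishOrder f x)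
              + (∑ x ∈ Z.filter (fun x => ((k : ℕ) : ℝ) < x ∧ x < (((m + 1 : ℕ)) : ℝ)),
                vanishOrder f x)
              ≤ ∑ x ∈ Z.filter (fun x => x ≤ (((m + 1 : ℕ)) : ℝ)), vanishOrder f x := by
            rw [← Finset.sum_union hdisj]
            exact Finset.sum_le_sum_of_subset (f := vanishOrder f) hunion
          -- parity information
          have hkI : ((k : ℕ) : ℝ) ∈ Set.Icc (0 : ℝ) (N : ℝ) :=
            ⟨Nat.cast_nonneg k, Nat.cast_le.mpr (by omega)⟩
          have hm1I : (((m + 1 : ℕ)) : ℝ) ∈ Set.Icc (0 : ℝ) (N : ℝ) :=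
            ⟨Nat.cast_nonneg _, Nat.cast_le.mpr hmN⟩
          have hklt : ((k : ℕ) : ℝ) < (((m + 1 : ℕ)) : ℝ) := Nat.cast_lt.mpr (by omega)
          have hpar := PAR _ ((k : ℕ) : ℝ) (((m + 1 : ℕ)) : ℝ) hkI hm1I hklt hfk hfm1 le_rfl
          have hIH := IH k (by omega) (by omega)
          by_cases hsc : a (m + 1) * a k < 0
          · -- a sign change at m+1
            have hscAt : SignChangeAt a (m + 1) :=
              ⟨k, by omega, hsc, fun j h1 h2 => hkmax j h1 (by omega)⟩
            have hSc : Set.ncard {j : ℕ | j ≤ k ∧ SignChangeAt a j} + 1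
                ≤ Set.ncard {j : ℕ | j ≤ m + 1 ∧ SignChangeAt a j} := by
              have hni : (m + 1) ∉ {j : ℕ | j ≤ k ∧ SignChangeAt a j} := by
                intro h
                exact absurd h.1 (by omega)
              have hins : insert (m + 1) {j : ℕ | j ≤ k ∧ SignChangeAt a j}
                  ⊆ {j : ℕ | j ≤ m + 1 ∧ SignChangeAt a j} := by
                intro j hj
                rcases Set.mem_insert_iff.mp hj with rfl | hj
                · exact ⟨le_refl _, hscAt⟩
                · exact ⟨hj.1.trans (by omega), hj.2⟩
              have h1 := Set.ncard_insert_of_notMem hni (Scfin k)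
              have h2 := Set.ncard_le_ncard hins (Scfin (m + 1))
              omega
            omega
          · -- no sign change at m+1: parity gives one extra zero
            have hpos : 0 < a (m + 1) * a k :=
              lt_of_le_of_ne (not_lt.mp hsc) (Ne.symm (mul_ne_zero ha hak))
            set W : ℕ := ∑ x ∈ Z.filter (fun x => ((k : ℕ) : ℝ) < x
                ∧ x < (((m + 1 : ℕ)) : ℝ)), vanishOrder f x with hWdef
            have heq2 : f ((k : ℕ) : ℝ) * f (((m + 1 : ℕ)) : ℝ) * (-1 : ℝ) ^ W
                = (-1 : ℝ) ^ (k + (m + 1) + W) * (a (m + 1) * a k) := by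
              rw [hval k (by omega), hval (m + 1) hmN, pow_add, pow_add]
              ring
            rw [heq2] at hpar
            have hE : 0 < ((-1 : ℝ)) ^ (k + (m + 1) + W) := by
              nlinarith [hpar, hpos]
            have hEven : (k + (m + 1) + W) % 2 = 0 := by
              rcases Nat.even_or_odd (k + (m + 1) + W) with he | ho
              · exact Nat.even_iff.mp he
              · exfalso
                rw [ho.neg_one_pow] at hE
                linarith
            have hScm := Scmono k (m + 1) (by omega)
            omega
  -- conclusion
  have hZfull : Z.filter (fun x => x ≤ (N : ℝ)) = Z :=
    Finset.filter_true_of_mem (fun x hx => ((memZ x).mp hx).1.2)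
  refine ⟨Z, hZ, ?_⟩
  have hK := KEY N le_rfl
  rw [hZfull] at hK
  exact hK
end
end

section
/- Let δ > 0, let n and n₁ be increasing functions on [0, δ] with n(0) = n₁(0) = 0 such that n₁ − n is increasing, and let a ∈ [0,1]. If ∫_0^δ (overline{n}^a(r) − n(r))/r² dr = ∞, then ∫_0^δ (overline{n₁}^a(r) − n₁(r))/r² dr = ∞. -/
open Filter MeasureTheory Set Topology

noncomputable section

/-- explicit candidate for the regularization -/
def NNr (n : ℝ → ℝ) (a δ : ℝ) (u : ℝ) : ℝ :=
  sSup ((fun t => n t - a * max (t - u) 0) '' Set.Icc 0 δ)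

section lemmas

variable {n n₁ : ℝ → ℝ} {a δ u : ℝ}

lemma NNr_bdd (hδ : 0 < δ) (hmono : MonotoneOn n (Set.Icc 0 δ)) (ha : 0 ≤ a) :
    BddAbove ((fun t => n t - a * max (t - u) 0) '' Set.Icc 0 δ) := by
  refine ⟨n δ, ?_⟩
  rintro y ⟨t, ht, rfl⟩
  show n t - a * max (t - u) 0 ≤ n δ
  have h1 : n t ≤ n δ := hmono ht (Set.right_mem_Icc.mpr hδ.le) ht.2
  have h2 : 0 ≤ a * max (t - u) 0 := mul_nonneg ha (le_max_right _ _)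
  linarith

lemma le_NNr (hδ : 0 < δ) (hmono : MonotoneOn n (Set.Icc 0 δ)) (ha : 0 ≤ a)
    {t : ℝ} (ht : t ∈ Set.Icc 0 δ) :
    n t - a * max (t - u) 0 ≤ NNr n a δ u :=
  le_csSup (NNr_bdd hδ hmono ha) ⟨t, ht, rfl⟩

/-- monotonicity and Lipschitz bound for admissible majorants -/
lemma phi_bounds (hδ : 0 < δ) (ha : 0 ≤ a) {φ : ℝ → ℝ}
    (hφ : ContDiffOn ℝ 1 φ (Set.Icc 0 δ))
    (hd : ∀ t ∈ Set.Icc 0 δ, 0 ≤ derivWithin φ (Set.Icc 0 δ) t ∧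
      derivWithin φ (Set.Icc 0 δ) t ≤ a)
    {s t : ℝ} (hs : s ∈ Set.Icc 0 δ) (ht : t ∈ Set.Icc 0 δ) (hst : s ≤ t) :
    0 ≤ φ t - φ s ∧ φ t - φ s ≤ a * (t - s) := by
  set ψ : ℝ → ℝ := fun x => φ x - a / 2 * x with hψ
  have hφdiff : DifferentiableOn ℝ φ (Set.Icc 0 δ) := hφ.differentiableOn one_ne_zero
  have hψdiff : DifferentiableOn ℝ ψ (Set.Icc 0 δ) :=
    hφdiff.sub ((differentiable_id.const_mul (a / 2)).differentiableOn)
  have hder : ∀ x ∈ Set.Icc 0 δ,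
      derivWithin ψ (Set.Icc 0 δ) x = derivWithin φ (Set.Icc 0 δ) x - a / 2 := by
    intro x hx
    have hud := (uniqueDiffOn_Icc hδ) x hx
    have h1 : HasDerivWithinAt (fun x : ℝ => a / 2 * x) (a / 2) (Set.Icc 0 δ) x := by
      simpa using ((hasDerivAt_id x).const_mul (a / 2)).hasDerivWithinAt
    exact ((hφdiff x hx).hasDerivWithinAt.sub h1).derivWithin hud
  have hbound : ∀ x ∈ Set.Icc 0 δ, ‖derivWithin ψ (Set.Icc 0 δ) x‖ ≤ a / 2 := by
    intro x hx
    rw [hder x hx, Real.norm_eq_abs, abs_le]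
    obtain ⟨h1, h2⟩ := hd x hx
    constructor <;> linarith
  have := Convex.norm_image_sub_le_of_norm_derivWithin_le hψdiff hbound
    (convex_Icc 0 δ) hs ht
  rw [Real.norm_eq_abs, Real.norm_eq_abs, abs_le, abs_of_nonneg (by linarith : (0:ℝ) ≤ t - s)]
    at this
  simp only [hψ] at this
  constructor <;> nlinarith [this.1, this.2]

lemma nonempty_adm (hδ : 0 < δ) (hmono : MonotoneOn n (Set.Icc 0 δ)) (ha : 0 ≤ a) :
    ∃ y, y ∈ {y : ℝ | ∃ φ : ℝ → ℝ, ContDiffOn ℝ 1 φ (Set.Icc 0 δ) ∧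
      (∀ t ∈ Set.Icc 0 δ, n t ≤ φ t) ∧
      (∀ t ∈ Set.Icc 0 δ, 0 ≤ derivWithin φ (Set.Icc 0 δ) t ∧
        derivWithin φ (Set.Icc 0 δ) t ≤ a) ∧ y = φ u} := by
  refine ⟨n δ, fun _ => n δ, contDiffOn_const, fun t ht => hmono ht (Set.right_mem_Icc.mpr hδ.le) ht.2,
    fun t ht => ?_, rfl⟩
  rw [derivWithin_fun_const]
  exact ⟨le_rfl, ha⟩

lemma lemA (hδ : 0 < δ) (hmono : MonotoneOn n (Set.Icc 0 δ)) (ha : 0 ≤ a)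
    (hu : u ∈ Set.Icc 0 δ) : NNr n a δ u ≤ upperRegOn n a (Set.Icc 0 δ) u := by
  apply le_csInf (nonempty_adm hδ hmono ha)
  rintro y ⟨φ, hφ, hge, hd, rfl⟩
  apply csSup_le ((Set.nonempty_Icc.mpr hδ.le).image _)
  rintro y ⟨t, ht, rfl⟩
  show n t - a * max (t - u) 0 ≤ φ u
  rcases le_total t u with h | h
  · have h1 : 0 ≤ φ u - φ t := (phi_bounds hδ ha hφ hd ht hu h).1
    have h2 : max (t - u) 0 = 0 := max_eq_right (by linarith)
    have := hge t ht
    rw [h2]; linarith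
  · have h1 : φ t - φ u ≤ a * (t - u) := (phi_bounds hδ ha hφ hd hu ht h).2
    have h2 : max (t - u) 0 = t - u := max_eq_left (by linarith)
    have := hge t ht
    rw [h2]; linarith

lemma lemB (hδ : 0 < δ) (hmono : MonotoneOn n (Set.Icc 0 δ)) (ha : 0 ≤ a) (ha1 : a ≤ 1)
    (hu : u ∈ Set.Icc 0 δ) : upperRegOn n a (Set.Icc 0 δ) u ≤ NNr n a δ u := by
  apply le_of_forall_pos_le_add
  intro ε hε
  set B := NNr n a δ u with hB
  set φ : ℝ → ℝ := fun t => B + a * ε * Real.log (1 + Real.exp ((t - u) / ε)) with hφdef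
  have hexppos : ∀ t : ℝ, (0:ℝ) < 1 + Real.exp ((t - u) / ε) := fun t => by
    have := Real.exp_pos ((t - u) / ε); linarith
  have hderiv : ∀ t : ℝ, HasDerivAt φ
      (a * ε * (Real.exp ((t - u) / ε) * (1 / ε) / (1 + Real.exp ((t - u) / ε)))) t := by
    intro t
    have h1 : HasDerivAt (fun t : ℝ => (t - u) / ε) (1 / ε) t := by
      simpa using ((hasDerivAt_id t).sub_const u).div_const ε
    have h2 := h1.exp
    have h3 : HasDerivAt (fun t : ℝ => 1 + Real.exp ((t - u) / ε))
        (Real.exp ((t - u) / ε) * (1 / ε)) t := h2.const_add 1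
    have h4 := h3.log (ne_of_gt (hexppos t))
    simpa [hφdef] using (h4.const_mul (a * ε)).const_add B
  have key : ∀ x : ℝ, max x 0 ≤ ε * Real.log (1 + Real.exp (x / ε)) := by
    intro x
    apply max_le
    · have h1 : x / ε = Real.log (Real.exp (x / ε)) := (Real.log_exp _).symm
      have h2 : Real.log (Real.exp (x / ε)) ≤ Real.log (1 + Real.exp (x / ε)) :=
        Real.log_le_log (Real.exp_pos _) (by linarith)
      have h4 : x / ε ≤ Real.log (1 + Real.exp (x / ε)) :=
        calc x / ε = Real.log (Real.exp (x / ε)) := (Real.log_exp _).symm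
          _ ≤ _ := h2
      calc x = ε * (x / ε) := by field_simp
        _ ≤ ε * Real.log (1 + Real.exp (x / ε)) := mul_le_mul_of_nonneg_left h4 hε.le
    · exact mul_nonneg hε.le (Real.log_nonneg (by have := Real.exp_pos (x / ε); linarith))
  have hmem : φ u ∈ {y : ℝ | ∃ ψ : ℝ → ℝ, ContDiffOn ℝ 1 ψ (Set.Icc 0 δ) ∧
      (∀ t ∈ Set.Icc 0 δ, n t ≤ ψ t) ∧
      (∀ t ∈ Set.Icc 0 δ, 0 ≤ derivWithin ψ (Set.Icc 0 δ) t ∧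
        derivWithin ψ (Set.Icc 0 δ) t ≤ a) ∧ φ u = ψ u} := by
    refine ⟨φ, ?_, ?_, ?_, rfl⟩
    · have hc : ContDiff ℝ 1 φ := by
        apply ContDiff.add contDiff_const
        apply ContDiff.mul contDiff_const
        apply ContDiff.log
        · exact ContDiff.add contDiff_const (((contDiff_id.sub contDiff_const).div_const ε).exp)
        · intro t; exact ne_of_gt (hexppos t)
      exact hc.contDiffOn
    · intro t ht
      have h1 : n t - a * max (t - u) 0 ≤ B := le_NNr hδ hmono ha ht
      have h2 : a * max (t - u) 0 ≤ a * (ε * Real.log (1 + Real.exp ((t - u) / ε))) :=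
        mul_le_mul_of_nonneg_left (key (t - u)) ha
      show n t ≤ B + a * ε * Real.log (1 + Real.exp ((t - u) / ε))
      have h3 : a * ε * Real.log (1 + Real.exp ((t - u) / ε))
          = a * (ε * Real.log (1 + Real.exp ((t - u) / ε))) := mul_assoc _ _ _
      linarith
    · intro t ht
      have hdw : derivWithin φ (Set.Icc 0 δ) t =
          a * ε * (Real.exp ((t - u) / ε) * (1 / ε) / (1 + Real.exp ((t - u) / ε))) :=
        (hderiv t).hasDerivWithinAt.derivWithin ((uniqueDiffOn_Icc hδ) t ht)
      rw [hdw]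
      constructor
      · apply mul_nonneg (mul_nonneg ha hε.le)
        apply div_nonneg (mul_nonneg (Real.exp_pos _).le (by positivity)) (hexppos t).le
      · have heq : a * ε * (Real.exp ((t - u) / ε) * (1 / ε) / (1 + Real.exp ((t - u) / ε)))
            = a * (Real.exp ((t - u) / ε) / (1 + Real.exp ((t - u) / ε))) := by
          field_simp
        rw [heq]
        have hle1 : Real.exp ((t - u) / ε) / (1 + Real.exp ((t - u) / ε)) ≤ 1 :=
          (div_le_one (hexppos t)).mpr (by have := Real.exp_pos ((t - u) / ε); linarith)
        calc a * (Real.exp ((t - u) / ε) / (1 + Real.exp ((t - u) / ε))) ≤ a * 1 :=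
              mul_le_mul_of_nonneg_left hle1 ha
          _ = a := mul_one a
  have hbdd : BddBelow {y : ℝ | ∃ ψ : ℝ → ℝ, ContDiffOn ℝ 1 ψ (Set.Icc 0 δ) ∧
      (∀ t ∈ Set.Icc 0 δ, n t ≤ ψ t) ∧
      (∀ t ∈ Set.Icc 0 δ, 0 ≤ derivWithin ψ (Set.Icc 0 δ) t ∧
        derivWithin ψ (Set.Icc 0 δ) t ≤ a) ∧ y = ψ u} := by
    refine ⟨n u, ?_⟩
    rintro y ⟨ψ, _, hge, _, rfl⟩
    exact hge u hu
  have h5 : upperRegOn n a (Set.Icc 0 δ) u ≤ φ u := csInf_le hbdd hmem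
  have h6 : φ u = B + a * ε * Real.log 2 := by
    simp only [hφdef]
    rw [sub_self, zero_div, Real.exp_zero]
    norm_num
  have h7 : a * ε * Real.log 2 ≤ ε := by
    have hl2 : Real.log 2 ≤ 1 := by
      have := Real.log_le_sub_one_of_pos (by norm_num : (0:ℝ) < 2); linarith
    have hl2' : 0 ≤ Real.log 2 := Real.log_nonneg one_le_two
    have h8 : a * Real.log 2 ≤ 1 := mul_le_one₀ ha1 hl2' hl2
    calc a * ε * Real.log 2 = a * Real.log 2 * ε := by ring
      _ ≤ 1 * ε := mul_le_mul_of_nonneg_right h8 hε.le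
      _ = ε := one_mul ε
  rw [h6] at h5
  linarith

lemma lem4 (hδ : 0 < δ) (hmono : MonotoneOn n (Set.Icc 0 δ))
    (hmono₁ : MonotoneOn n₁ (Set.Icc 0 δ))
    (hsucc : MonotoneOn (fun r => n₁ r - n r) (Set.Icc 0 δ)) (ha : 0 ≤ a)
    (hu : u ∈ Set.Icc 0 δ) :
    NNr n a δ u + (n₁ u - n u) ≤ NNr n₁ a δ u := by
  have h1 : ∀ t ∈ Set.Icc 0 δ,
      (n t - a * max (t - u) 0) + (n₁ u - n u) ≤ NNr n₁ a δ u := by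
    intro t ht
    rcases le_total t u with h | h
    · have hmax : max (t - u) 0 = 0 := max_eq_right (by linarith)
      have hnt : n t ≤ n u := hmono ht hu h
      have h2 : n₁ u - a * max (u - u) 0 ≤ NNr n₁ a δ u := le_NNr hδ hmono₁ ha hu
      simp only [sub_self, max_self] at h2
      rw [hmax]
      simp only [mul_zero, sub_zero, max_eq_right (le_refl (0:ℝ))] at h2 ⊢
      linarith
    · have hm : n₁ u - n u ≤ n₁ t - n t := hsucc hu ht h
      have h2 : n₁ t - a * max (t - u) 0 ≤ NNr n₁ a δ u := le_NNr hδ hmono₁ ha ht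
      linarith
  have h2 : NNr n a δ u ≤ NNr n₁ a δ u - (n₁ u - n u) := by
    apply csSup_le ((Set.nonempty_Icc.mpr hδ.le).image _)
    rintro y ⟨t, ht, rfl⟩
    show n t - a * max (t - u) 0 ≤ NNr n₁ a δ u - (n₁ u - n u)
    linarith [h1 t ht]
  linarith

end lemmas

/-- Lemma 3 of the paper. -/
theorem regularization_integral_mono (δ : ℝ) (hδ : 0 < δ) (n n₁ : ℝ → ℝ)
    (hmono : MonotoneOn n (Set.Icc 0 δ)) (h0 : n 0 = 0)
    (hmono₁ : MonotoneOn n₁ (Set.Icc 0 δ)) (h0₁ : n₁ 0 = 0)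
    (hsucc : MonotoneOn (fun r => n₁ r - n r) (Set.Icc 0 δ))
    (a : ℝ) (ha : a ∈ Set.Icc (0 : ℝ) 1)
    (hdiv : ∫⁻ r in Set.Ioc (0 : ℝ) δ,
        ENNReal.ofReal ((upperReg n a δ r - n r) / r ^ 2) = ⊤) :
    ∫⁻ r in Set.Ioc (0 : ℝ) δ,
      ENNReal.ofReal ((upperReg n₁ a δ r - n₁ r) / r ^ 2) = ⊤ := by
  obtain ⟨ha0, ha1⟩ := ha
  have key : ∀ r ∈ Set.Ioc (0:ℝ) δ,
      (upperReg n a δ r - n r) / r ^ 2 ≤ (upperReg n₁ a δ r - n₁ r) / r ^ 2 := by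
    intro r hr
    have hrI : r ∈ Set.Icc 0 δ := ⟨hr.1.le, hr.2⟩
    have hB := lemB hδ hmono ha0 ha1 hrI
    have hA := lemA hδ hmono₁ ha0 hrI
    have h4 := lem4 hδ hmono hmono₁ hsucc ha0 hrI
    have hr2 : (0:ℝ) < r ^ 2 := pow_pos hr.1 2
    apply (div_le_div_iff_of_pos_right hr2).mpr
    have e1 : upperReg n a δ r = upperRegOn n a (Set.Icc 0 δ) r := rfl
    have e2 : upperReg n₁ a δ r = upperRegOn n₁ a (Set.Icc 0 δ) r := rfl
    rw [e1, e2]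
    linarith
  rw [eq_top_iff, ← hdiv]
  apply lintegral_mono_ae
  filter_upwards [ae_restrict_mem measurableSet_Ioc] with r hr
  exact ENNReal.ofReal_le_ofReal (key r hr)
end
end

section
/- Let (J_n)_{n ∈ ℕ} be a countable family of open bounded intervals of the real line whose lengths tend to zero, and let E be the union of these intervals. Then there exists a subfamily of these intervals whose union is also E and such that no point of E belongs to more than two intervals of the subfamily. -/
open Filter MeasureTheory Set Topology

noncomputable section

namespace IntervalCover

variable (α β : ℕ → ℝ)

def ESet : Set ℝ := ⋃ k, Set.Ioo (α k) (β k)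

open Classical in
noncomputable def next (x : ℝ) : ℕ :=
  if h : ∃ k, x ∈ Set.Ioo (α k) (β k) ∧ ∀ m, x ∈ Set.Ioo (α m) (β m) → β m ≤ β k
  then h.choose else 0

open Classical in
noncomputable def chain (x0 : ℝ) : ℕ → ℕ
  | 0 => next α β x0
  | i + 1 => if β (chain x0 i) ∈ ESet α β then next α β (β (chain x0 i)) else chain x0 i

def Alive (x0 : ℝ) (i : ℕ) : Prop := ∀ q < i, β (chain α β x0 q) ∈ ESet α β

variable {α β}
lemma finite_long (hlen : Tendsto (fun k => β k - α k) atTop (nhds 0)) (ε : ℝ) (hε : 0 < ε) : {m | ε ≤ β m - α m}.Finite := by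
  have h : ∀ᶠ m in atTop, β m - α m < ε := hlen (Iio_mem_nhds hε)
  obtain ⟨N, hN⟩ := eventually_atTop.1 h
  refine (Set.finite_Iio N).subset fun m hm => ?_
  simp only [mem_setOf_eq] at hm
  by_contra hc
  simp only [Set.mem_Iio, not_lt] at hc
  exact absurd (hN m hc) (not_lt.2 hm)

lemma attain (hlen : Tendsto (fun k => β k - α k) atTop (nhds 0)) {x : ℝ} (hx : x ∈ ESet α β) :
    ∃ k, x ∈ Set.Ioo (α k) (β k) ∧ ∀ m, x ∈ Set.Ioo (α m) (β m) → β m ≤ β k := by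
  obtain ⟨k0, hk0⟩ := mem_iUnion.1 hx
  set T : Set ℕ := {m | x ∈ Set.Ioo (α m) (β m) ∧ β k0 ≤ β m} with hT
  have hTfin : T.Finite := by
    refine (finite_long hlen (β k0 - x) (by linarith [hk0.2])).subset fun m hm => ?_
    obtain ⟨⟨h1, h2⟩, h3⟩ := hm
    simp only [mem_setOf_eq]
    linarith
  have hk0T : k0 ∈ hTfin.toFinset := hTfin.mem_toFinset.2 ⟨hk0, le_rfl⟩
  obtain ⟨k, hkT, hk⟩ := hTfin.toFinset.exists_max_image β ⟨k0, hk0T⟩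
  rw [Set.Finite.mem_toFinset] at hkT
  refine ⟨k, hkT.1, fun m hm => ?_⟩
  by_cases h : β k0 ≤ β m
  · exact hk m (hTfin.mem_toFinset.2 ⟨hm, h⟩)
  · exact le_trans (le_of_not_ge h) (hk k0 hk0T)

lemma next_spec (hlen : Tendsto (fun k => β k - α k) atTop (nhds 0)) {x : ℝ} (hx : x ∈ ESet α β) :
    x ∈ Set.Ioo (α (next α β x)) (β (next α β x)) ∧
      ∀ m, x ∈ Set.Ioo (α m) (β m) → β m ≤ β (next α β x) := by
  have h := attain hlen hx
  rw [next, dif_pos h]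
  exact h.choose_spec

variable (x0 : ℝ)

lemma chain_zero : chain α β x0 0 = next α β x0 := rfl

lemma chain_succ_of_mem {i : ℕ} (h : β (chain α β x0 i) ∈ ESet α β) :
    chain α β x0 (i + 1) = next α β (β (chain α β x0 i)) := by
  rw [chain, if_pos h]

lemma chain_succ_of_not {i : ℕ} (h : β (chain α β x0 i) ∉ ESet α β) :
    chain α β x0 (i + 1) = chain α β x0 i := by
  rw [chain, if_neg h]

lemma dead_stable {q : ℕ} (h : β (chain α β x0 q) ∉ ESet α β) :
    ∀ j, q ≤ j → chain α β x0 j = chain α β x0 q := by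
  intro j hj
  induction j with
  | zero =>
    have : q = 0 := Nat.le_zero.1 hj
    rw [this]
  | succ j ih =>
    rcases Nat.lt_or_ge q (j + 1) with h1 | h1
    · have hqj : q ≤ j := Nat.lt_succ_iff.1 h1
      have hc := ih hqj
      rw [chain_succ_of_not x0 (by rw [hc]; exact h), hc]
    · have : q = j + 1 := le_antisymm hj h1
      rw [this]

lemma exists_good (i : ℕ) :
    ∃ j, j ≤ i ∧ Alive α β x0 j ∧ chain α β x0 j = chain α β x0 i := by
  induction i using Nat.strong_induction_on with
  | _ i ih =>
    by_cases hA : Alive α β x0 i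
    · exact ⟨i, le_rfl, hA, rfl⟩
    · simp only [Alive, not_forall] at hA
      obtain ⟨q, hq, hqE⟩ := hA
      obtain ⟨j, hj1, hj2, hj3⟩ := ih q hq
      exact ⟨j, le_trans hj1 (le_of_lt hq), hj2,
        by rw [hj3, dead_stable x0 hqE i (le_of_lt hq)]⟩

lemma alive_mono {i j : ℕ} (hij : j ≤ i) (h : Alive α β x0 i) : Alive α β x0 j :=
  fun q hq => h q (lt_of_lt_of_le hq hij)

lemma mem_chain_zero (hlen : Tendsto (fun k => β k - α k) atTop (nhds 0)) (hx0 : x0 ∈ ESet α β) :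
    x0 ∈ Set.Ioo (α (chain α β x0 0)) (β (chain α β x0 0)) ∧
      ∀ m, x0 ∈ Set.Ioo (α m) (β m) → β m ≤ β (chain α β x0 0) := by
  rw [chain_zero]; exact next_spec hlen hx0

lemma step_spec (hlen : Tendsto (fun k => β k - α k) atTop (nhds 0)) {i : ℕ} (h : Alive α β x0 (i + 1)) :
    β (chain α β x0 i) ∈ Set.Ioo (α (chain α β x0 (i+1))) (β (chain α β x0 (i+1))) ∧
      ∀ m, β (chain α β x0 i) ∈ Set.Ioo (α m) (β m) → β m ≤ β (chain α β x0 (i+1)) := by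
  have hb : β (chain α β x0 i) ∈ ESet α β := h i (Nat.lt_succ_self i)
  rw [chain_succ_of_mem x0 hb]
  exact next_spec hlen hb

lemma b_lt (hlen : Tendsto (fun k => β k - α k) atTop (nhds 0)) {i : ℕ} (h : Alive α β x0 (i + 1)) :
    β (chain α β x0 i) < β (chain α β x0 (i+1)) :=
  (step_spec x0 hlen h).1.2

lemma b_mono (hlen : Tendsto (fun k => β k - α k) atTop (nhds 0)) {i j : ℕ} (hij : i < j) (h : Alive α β x0 j) :
    β (chain α β x0 i) < β (chain α β x0 j) := by
  induction j with
  | zero => omega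
  | succ j ih =>
    rcases Nat.lt_or_ge i j with h1 | h1
    · exact lt_trans (ih h1 (alive_mono x0 (Nat.le_succ j) h)) (b_lt x0 hlen h)
    · have h2 : i = j := by omega
      subst h2
      exact b_lt x0 hlen h

lemma b_mono' (hlen : Tendsto (fun k => β k - α k) atTop (nhds 0)) {i j : ℕ} (hij : i ≤ j) (h : Alive α β x0 j) :
    β (chain α β x0 i) ≤ β (chain α β x0 j) := by
  rcases lt_or_eq_of_le hij with h1 | h1
  · exact le_of_lt (b_mono x0 hlen h1 h)
  · rw [h1]

lemma sep (hlen : Tendsto (fun k => β k - α k) atTop (nhds 0)) {i : ℕ} (h : Alive α β x0 (i + 2)) :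
    β (chain α β x0 i) ≤ α (chain α β x0 (i + 2)) := by
  by_contra h'
  push_neg at h'
  have h1 : Alive α β x0 (i + 1) := alive_mono x0 (by omega) h
  have hb1 : β (chain α β x0 i) < β (chain α β x0 (i+1)) := b_lt x0 hlen h1
  have hb2 : β (chain α β x0 (i+1)) < β (chain α β x0 (i+2)) := b_lt x0 hlen h
  have hmem : β (chain α β x0 i) ∈ Set.Ioo (α (chain α β x0 (i+2))) (β (chain α β x0 (i+2))) :=
    ⟨h', by linarith⟩
  have := (step_spec x0 hlen h1).2 _ hmem
  linarith

lemma sep' (hlen : Tendsto (fun k => β k - α k) atTop (nhds 0)) {i m : ℕ} (him : i + 2 ≤ m) (h : Alive α β x0 m) :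
    β (chain α β x0 i) ≤ α (chain α β x0 m) := by
  obtain ⟨p, rfl⟩ : ∃ p, m = p + 2 := ⟨m - 2, by omega⟩
  calc β (chain α β x0 i) ≤ β (chain α β x0 p) :=
        b_mono' x0 hlen (by omega) (alive_mono x0 (by omega) h)
    _ ≤ α (chain α β x0 (p + 2)) := sep x0 hlen h

lemma x0_le_alpha (hlen : Tendsto (fun k => β k - α k) atTop (nhds 0)) (hx0 : x0 ∈ ESet α β) {i : ℕ} (hi : 1 ≤ i) (h : Alive α β x0 i) :
    x0 ≤ α (chain α β x0 i) := by
  rcases eq_or_lt_of_le hi with h1 | h1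
  · -- i = 1
    subst h1
    by_contra h'
    push_neg at h'
    have hb0 : x0 < β (chain α β x0 0) := (mem_chain_zero x0 hlen hx0).1.2
    have hb1 : β (chain α β x0 0) < β (chain α β x0 1) := b_lt x0 hlen h
    have hmem : x0 ∈ Set.Ioo (α (chain α β x0 1)) (β (chain α β x0 1)) := ⟨h', by linarith⟩
    have := (mem_chain_zero x0 hlen hx0).2 _ hmem
    linarith
  · -- i ≥ 2
    have hb0 : x0 < β (chain α β x0 0) := (mem_chain_zero x0 hlen hx0).1.2
    have h2 : β (chain α β x0 0) ≤ β (chain α β x0 (i-2)) :=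
      b_mono' x0 hlen (by omega) (alive_mono x0 (by omega) h)
    have h3 := sep' x0 hlen (by omega : (i-2) + 2 ≤ i) h
    linarith


lemma cover (x0 : ℝ) (hlen : Tendsto (fun k => β k - α k) atTop (nhds 0))
    (hx0 : x0 ∈ ESet α β) (y : ℝ) (hxy : x0 ≤ y) (hIcc : Set.Icc x0 y ⊆ ESet α β) :
    ∃ i, Alive α β x0 i ∧ y ∈ Set.Ioo (α (chain α β x0 i)) (β (chain α β x0 i)) := by
  have hb0 : x0 < β (chain α β x0 0) := (mem_chain_zero x0 hlen hx0).1.2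
  have ha0 : α (chain α β x0 0) < x0 := (mem_chain_zero x0 hlen hx0).1.1
  by_cases hP : ∃ i, y < β (chain α β x0 i)
  · -- take least such i
    set i := Nat.find hP with hi
    have hspec : y < β (chain α β x0 i) := Nat.find_spec hP
    rcases Nat.eq_zero_or_pos i with h0 | hpos
    · exact ⟨0, fun q hq => absurd hq (Nat.not_lt_zero q),
        by rw [h0] at hspec; exact ⟨by linarith, hspec⟩⟩
    · obtain ⟨p, hp⟩ : ∃ p, i = p + 1 := ⟨i - 1, by omega⟩
      have hle : ∀ q, q ≤ p → β (chain α β x0 q) ≤ y := by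
        intro q hq
        have := Nat.find_min hP (m := q) (by omega)
        linarith [not_lt.1 this]
      have key : ∀ q, q ≤ p → β (chain α β x0 q) ∈ ESet α β := by
        intro q
        induction q using Nat.strong_induction_on with
        | _ q ih =>
          intro hq
          have hA : Alive α β x0 q := fun q' hq' => ih q' hq' (by omega)
          have h1 : x0 ≤ β (chain α β x0 q) := by
            rcases Nat.eq_zero_or_pos q with hq0 | hq0
            · rw [hq0]; linarith
            · linarith [b_mono x0 hlen (show 0 < q from hq0) hA]
          exact hIcc ⟨h1, hle q hq⟩
      have hA : Alive α β x0 (p + 1) := fun q hq => key q (by omega)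
      have hstep := step_spec x0 hlen hA
      refine ⟨p + 1, hA, ⟨?_, by rw [hp] at hspec; exact hspec⟩⟩
      calc α (chain α β x0 (p+1)) < β (chain α β x0 p) := hstep.1.1
        _ ≤ y := hle p le_rfl
  · -- all b i ≤ y : derive contradiction
    exfalso
    push_neg at hP
    have hAall : ∀ i, Alive α β x0 i := by
      intro i
      induction i using Nat.strong_induction_on with
      | _ i ih =>
        intro q hq
        have hA : Alive α β x0 q := ih q hq
        have h1 : x0 ≤ β (chain α β x0 q) := by
          rcases Nat.eq_zero_or_pos q with hq0 | hq0
          · rw [hq0]; linarith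
          · linarith [b_mono x0 hlen (show 0 < q from hq0) hA]
        exact hIcc ⟨h1, hP q⟩
    have hbdd : BddAbove (Set.range (fun i => β (chain α β x0 i))) :=
      ⟨y, by rintro t ⟨i, rfl⟩; exact hP i⟩
    set s := ⨆ i, β (chain α β x0 i) with hs
    have hsle : s ≤ y := ciSup_le hP
    have hsge : β (chain α β x0 0) ≤ s := le_ciSup hbdd 0
    have hsE : s ∈ ESet α β := hIcc ⟨by linarith, hsle⟩
    obtain ⟨m, hm⟩ := mem_iUnion.1 hsE
    obtain ⟨i, hi⟩ : ∃ i, α m < β (chain α β x0 i) := exists_lt_of_lt_ciSup hm.1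
    have hbi : β (chain α β x0 i) ∈ Set.Ioo (α m) (β m) :=
      ⟨hi, lt_of_le_of_lt (le_ciSup hbdd i) hm.2⟩
    have := (step_spec x0 hlen (hAall (i+1))).2 m hbi
    have h2 : β (chain α β x0 (i+1)) ≤ s := le_ciSup hbdd (i+1)
    linarith [hm.2]

lemma Ioo_subset_ESet (k : ℕ) : Set.Ioo (α k) (β k) ⊆ ESet α β :=
  fun t ht => mem_iUnion.2 ⟨k, ht⟩

lemma subset_comp (x0 : ℝ) (hαβ : ∀ k, α k < β k)
    (hlen : Tendsto (fun k => β k - α k) atTop (nhds 0))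
    (hx0 : x0 ∈ ESet α β) {i : ℕ} (h : Alive α β x0 i) :
    Set.Ioo (α (chain α β x0 i)) (β (chain α β x0 i)) ⊆
      connectedComponentIn (ESet α β) x0 := by
  induction i with
  | zero =>
    exact isPreconnected_Ioo.subset_connectedComponentIn
      (mem_chain_zero x0 hlen hx0).1 (Ioo_subset_ESet _)
  | succ i ih =>
    have hA : Alive α β x0 i := alive_mono x0 (Nat.le_succ i) h
    have hIH := ih hA
    have hstep := (step_spec x0 hlen h).1
    -- pick y in the overlap of J (chain i) and J (chain (i+1))
    obtain ⟨y, hy1, hy2⟩ := exists_between (show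
        max (α (chain α β x0 i)) (α (chain α β x0 (i+1))) < β (chain α β x0 i) from
      max_lt (hαβ _) hstep.1)
    have hyi : y ∈ Set.Ioo (α (chain α β x0 i)) (β (chain α β x0 i)) :=
      ⟨lt_of_le_of_lt (le_max_left _ _) hy1, hy2⟩
    have hyi1 : y ∈ Set.Ioo (α (chain α β x0 (i+1))) (β (chain α β x0 (i+1))) :=
      ⟨lt_of_le_of_lt (le_max_right _ _) hy1, lt_trans hy2 hstep.2⟩
    have hycomp : y ∈ connectedComponentIn (ESet α β) x0 := hIH hyi
    rw [connectedComponentIn_eq hycomp]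
    exact isPreconnected_Ioo.subset_connectedComponentIn hyi1 (Ioo_subset_ESet _)


lemma window (x0 : ℝ) (hlen : Tendsto (fun k => β k - α k) atTop (nhds 0))
    {x : ℝ} {i j : ℕ} (hj : Alive α β x0 j)
    (hxi : x ∈ Set.Ioo (α (chain α β x0 i)) (β (chain α β x0 i)))
    (hxj : x ∈ Set.Ioo (α (chain α β x0 j)) (β (chain α β x0 j)))
    (hij : i + 2 ≤ j) : False := by
  have := sep' x0 hlen hij hj
  linarith [hxi.2, hxj.1]

section Mirror

lemma hlen_neg (hlen : Tendsto (fun k => β k - α k) atTop (nhds 0)) :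
    Tendsto (fun k => (-α k) - (-β k)) atTop (nhds 0) := by
  have h : (fun k => (-α k) - (-β k)) = (fun k => β k - α k) := by funext k; ring
  rw [h]; exact hlen

lemma mem_Ioo_neg (k : ℕ) (x : ℝ) :
    x ∈ Set.Ioo (-β k) (-α k) ↔ -x ∈ Set.Ioo (α k) (β k) := by
  constructor
  · rintro ⟨h1, h2⟩; exact ⟨by linarith, by linarith⟩
  · rintro ⟨h1, h2⟩; exact ⟨by linarith, by linarith⟩

lemma mem_ESet_neg (x : ℝ) :
    x ∈ ESet (fun k => -β k) (fun k => -α k) ↔ -x ∈ ESet α β := by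
  simp only [ESet, mem_iUnion]
  constructor
  · rintro ⟨k, hk⟩; exact ⟨k, (mem_Ioo_neg k x).1 hk⟩
  · rintro ⟨k, hk⟩; exact ⟨k, (mem_Ioo_neg k x).2 hk⟩

lemma ESet_neg_eq : ESet (fun k => -β k) (fun k => -α k) = {u : ℝ | -u ∈ ESet α β} := by
  ext u; exact mem_ESet_neg u

lemma comp_neg {s : Set ℝ} {x : ℝ} (hx : -x ∈ s) {t : ℝ}
    (ht : t ∈ connectedComponentIn {u : ℝ | -u ∈ s} x) :
    -t ∈ connectedComponentIn s (-x) := by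
  have himg : IsPreconnected ((fun u : ℝ => -u) '' connectedComponentIn {u : ℝ | -u ∈ s} x) :=
    (isPreconnected_connectedComponentIn).image _ (continuous_neg.continuousOn)
  have hsub : (fun u : ℝ => -u) '' connectedComponentIn {u : ℝ | -u ∈ s} x ⊆ s := by
    rintro _ ⟨u, hu, rfl⟩
    exact (connectedComponentIn_subset {u : ℝ | -u ∈ s} x) hu
  have hmem : -x ∈ (fun u : ℝ => -u) '' connectedComponentIn {u : ℝ | -u ∈ s} x :=
    ⟨x, mem_connectedComponentIn hx, rfl⟩
  exact himg.subset_connectedComponentIn hmem hsub ⟨t, ht, rfl⟩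

end Mirror

section Assemble

variable (α β)

noncomputable def lchain (z : ℝ) : ℕ → ℕ := chain (fun k => -β k) (fun k => -α k) (-z)

def AliveL (z : ℝ) (i : ℕ) : Prop := Alive (fun k => -β k) (fun k => -α k) (-z) i

noncomputable def pa0 (x0 : ℝ) : ℝ := α (chain α β x0 0)

def prune (x0 : ℝ) : Prop :=
  pa0 α β x0 ∈ ESet α β ∧ β (chain α β x0 0) ∈ ESet α β ∧
    α (chain α β x0 1) < β (lchain α β (pa0 α β x0) 0)

def SC (x0 : ℝ) : Set ℕ :=
  {k | ∃ i, Alive α β x0 i ∧ k = chain α β x0 i ∧ (prune α β x0 → i ≠ 0)} ∪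
  {k | pa0 α β x0 ∈ ESet α β ∧ ∃ i, AliveL α β (pa0 α β x0) i ∧ k = lchain α β (pa0 α β x0) i}

noncomputable def mid' (n : ℕ) : ℝ := (α n + β n) / 2

noncomputable def rep' (n : ℕ) : ℕ :=
  sInf {m | mid' α β m ∈ connectedComponentIn (ESet α β) (mid' α β n)}

lemma alive_zero' (x0 : ℝ) : Alive α β x0 0 := fun q hq => absurd hq (Nat.not_lt_zero q)

lemma aliveL_zero' (z : ℝ) : AliveL α β z 0 := fun q hq => absurd hq (Nat.not_lt_zero q)

variable {α β}
variable (hαβ : ∀ k, α k < β k) (hlen : Tendsto (fun k => β k - α k) atTop (nhds 0))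

include hαβ hlen

set_option linter.unusedSectionVars false

lemma hαβ_neg : ∀ k, (-β k) < (-α k) := fun k => neg_lt_neg (hαβ k)

lemma mem_ESet_neg' {z : ℝ} (hz : z ∈ ESet α β) :
    -z ∈ ESet (fun k => -β k) (fun k => -α k) :=
  (mem_ESet_neg (-z)).2 (by rwa [neg_neg])

lemma lchain_zero_spec (z : ℝ) (hz : z ∈ ESet α β) :
    (α (lchain α β z 0) < z ∧ z < β (lchain α β z 0)) ∧
      ∀ m, z ∈ Set.Ioo (α m) (β m) → α (lchain α β z 0) ≤ α m := by
  have h := mem_chain_zero (α := fun k => -β k) (β := fun k => -α k) (-z)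
    (hlen_neg hlen) (mem_ESet_neg' hαβ hlen hz)
  have h11 : -β (lchain α β z 0) < -z := h.1.1
  have h12 : -z < -α (lchain α β z 0) := h.1.2
  refine ⟨⟨by linarith, by linarith⟩, ?_⟩
  intro m hm
  have hm' : -z ∈ Set.Ioo (-β m) (-α m) := (mem_Ioo_neg m (-z)).2 (by rwa [neg_neg])
  have h2 : -α m ≤ -α (lchain α β z 0) := h.2 m hm'
  linarith

lemma lchain_le (z : ℝ) (hz : z ∈ ESet α β) {i : ℕ} (hi : 1 ≤ i)
    (h : AliveL α β z i) : β (lchain α β z i) ≤ z := by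
  have := x0_le_alpha (α := fun k => -β k) (β := fun k => -α k) (-z)
    (hlen_neg hlen) (mem_ESet_neg' hαβ hlen hz) hi h
  have h2 : -z ≤ -β (lchain α β z i) := this
  linarith

lemma lchain_subset_comp (z : ℝ) (hz : z ∈ ESet α β) {i : ℕ} (h : AliveL α β z i)
    {x : ℝ} (hx : x ∈ Set.Ioo (α (lchain α β z i)) (β (lchain α β z i))) :
    x ∈ connectedComponentIn (ESet α β) z := by
  have hx' : -x ∈ Set.Ioo (-β (lchain α β z i)) (-α (lchain α β z i)) :=
    (mem_Ioo_neg _ (-x)).2 (by rwa [neg_neg])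
  have h2 := subset_comp (α := fun k => -β k) (β := fun k => -α k) (-z)
    (hαβ_neg hαβ hlen) (hlen_neg hlen) (mem_ESet_neg' hαβ hlen hz) h hx'
  rw [ESet_neg_eq] at h2
  have h3 := comp_neg (s := ESet α β) (x := -z) (by rwa [neg_neg]) h2
  rwa [neg_neg, neg_neg] at h3

lemma lchain_cover (z : ℝ) (hz : z ∈ ESet α β) (y : ℝ) (hyz : y ≤ z)
    (hIcc : Set.Icc y z ⊆ ESet α β) :
    ∃ i, AliveL α β z i ∧ y ∈ Set.Ioo (α (lchain α β z i)) (β (lchain α β z i)) := by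
  have hIcc' : Set.Icc (-z) (-y) ⊆ ESet (fun k => -β k) (fun k => -α k) := by
    intro t ht
    exact (mem_ESet_neg t).2 (hIcc ⟨by linarith [ht.2], by linarith [ht.1]⟩)
  obtain ⟨i, hA, hy⟩ := cover (α := fun k => -β k) (β := fun k => -α k) (-z)
    (hlen_neg hlen) (mem_ESet_neg' hαβ hlen hz) (-y) (by linarith) hIcc'
  refine ⟨i, hA, ?_⟩
  have := (mem_Ioo_neg (lchain α β z i) (-y)).1 hy
  rwa [neg_neg] at this

lemma lwindow (z : ℝ) {x : ℝ} {i j : ℕ} (hj : AliveL α β z j)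
    (hxi : x ∈ Set.Ioo (α (lchain α β z i)) (β (lchain α β z i)))
    (hxj : x ∈ Set.Ioo (α (lchain α β z j)) (β (lchain α β z j)))
    (hij : i + 2 ≤ j) : False := by
  refine window (α := fun k => -β k) (β := fun k => -α k) (-z) (hlen_neg hlen)
    (x := -x) hj ?_ ?_ hij
  · exact (mem_Ioo_neg _ (-x)).2 (by rwa [neg_neg])
  · exact (mem_Ioo_neg _ (-x)).2 (by rwa [neg_neg])

-- basic facts about the base point
lemma pa0_lt (x0 : ℝ) (hx0 : x0 ∈ ESet α β) : pa0 α β x0 < x0 :=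
  (mem_chain_zero x0 hlen hx0).1.1

lemma x0_lt_b0 (x0 : ℝ) (hx0 : x0 ∈ ESet α β) : x0 < β (chain α β x0 0) :=
  (mem_chain_zero x0 hlen hx0).1.2

-- junction fact : β (L 0) ≤ β (r 0)
lemma junction (x0 : ℝ) (hx0 : x0 ∈ ESet α β) (ha0 : pa0 α β x0 ∈ ESet α β) :
    β (lchain α β (pa0 α β x0) 0) ≤ β (chain α β x0 0) := by
  have hL := (lchain_zero_spec hαβ hlen (pa0 α β x0) ha0).1
  rcases lt_or_ge x0 (β (lchain α β (pa0 α β x0) 0)) with h1 | h1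
  · have hmem : x0 ∈ Set.Ioo (α (lchain α β (pa0 α β x0) 0)) (β (lchain α β (pa0 α β x0) 0)) :=
      ⟨lt_trans hL.1 (pa0_lt hαβ hlen x0 hx0), h1⟩
    exact (mem_chain_zero x0 hlen hx0).2 _ hmem
  · linarith [x0_lt_b0 hαβ hlen x0 hx0]

lemma cover_SC (x0 : ℝ) (hx0 : x0 ∈ ESet α β) (x : ℝ)
    (hcomp : x ∈ connectedComponentIn (ESet α β) x0) :
    ∃ k ∈ SC α β x0, x ∈ Set.Ioo (α k) (β k) := by
  have hxE : x ∈ ESet α β := connectedComponentIn_subset _ _ hcomp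
  have hx0c : x0 ∈ connectedComponentIn (ESet α β) x0 := mem_connectedComponentIn hx0
  have hpre : IsPreconnected (connectedComponentIn (ESet α β) x0) :=
    isPreconnected_connectedComponentIn
  have ha0lt : pa0 α β x0 < x0 := pa0_lt hαβ hlen x0 hx0
  have hb0gt : x0 < β (chain α β x0 0) := x0_lt_b0 hαβ hlen x0 hx0
  -- resolving the case x ∈ J (r 0)
  have resolve0 : x ∈ Set.Ioo (α (chain α β x0 0)) (β (chain α β x0 0)) →
      ∃ k ∈ SC α β x0, x ∈ Set.Ioo (α k) (β k) := by
    intro hx'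
    by_cases hpr : prune α β x0
    · obtain ⟨ha0, hb0E, hlt⟩ := hpr
      have hL := (lchain_zero_spec hαβ hlen (pa0 α β x0) ha0).1
      rcases lt_or_ge x (β (lchain α β (pa0 α β x0) 0)) with hxl | hxl
      · refine ⟨lchain α β (pa0 α β x0) 0, Or.inr ⟨ha0, 0, aliveL_zero' α β _, rfl⟩,
          ⟨lt_trans hL.1 hx'.1, hxl⟩⟩
      · have hA1 : Alive α β x0 1 := by
          intro q hq
          have : q = 0 := by omega
          rw [this]; exact hb0E
        have hb1 : β (chain α β x0 0) < β (chain α β x0 1) := b_lt x0 hlen hA1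
        refine ⟨chain α β x0 1, Or.inl ⟨1, hA1, rfl, fun _ => one_ne_zero⟩,
          ⟨by linarith [hx'.1], by linarith [hx'.2]⟩⟩
    · exact ⟨chain α β x0 0, Or.inl ⟨0, alive_zero' α β x0, rfl, fun hp => absurd hp hpr⟩, hx'⟩
  rcases le_or_gt x0 x with hle | hlt
  · have hIcc : Set.Icc x0 x ⊆ ESet α β :=
      fun t ht => connectedComponentIn_subset _ _ (hpre.Icc_subset hx0c hcomp ht)
    obtain ⟨i, hA, hxi⟩ := cover x0 hlen hx0 x hle hIcc
    rcases Nat.eq_zero_or_pos i with h0 | h0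
    · rw [h0] at hxi; exact resolve0 hxi
    · exact ⟨chain α β x0 i, Or.inl ⟨i, hA, rfl, fun _ => by omega⟩, hxi⟩
  · rcases lt_or_ge (pa0 α β x0) x with h1 | h2
    · exact resolve0 ⟨h1, by linarith⟩
    · have hIccx : Set.Icc x x0 ⊆ ESet α β :=
        fun t ht => connectedComponentIn_subset _ _ (hpre.Icc_subset hcomp hx0c ht)
      have ha0E : pa0 α β x0 ∈ ESet α β := hIccx ⟨h2, le_of_lt ha0lt⟩
      have hIcc2 : Set.Icc x (pa0 α β x0) ⊆ ESet α β :=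
        fun t ht => hIccx ⟨ht.1, le_trans ht.2 (le_of_lt ha0lt)⟩
      obtain ⟨i, hA, hxi⟩ := lchain_cover hαβ hlen (pa0 α β x0) ha0E x h2 hIcc2
      exact ⟨lchain α β (pa0 α β x0) i, Or.inr ⟨ha0E, i, hA, rfl⟩, hxi⟩

lemma a0_mem_comp (x0 : ℝ) (hx0 : x0 ∈ ESet α β) (ha0 : pa0 α β x0 ∈ ESet α β) :
    pa0 α β x0 ∈ connectedComponentIn (ESet α β) x0 := by
  have hEopen : IsOpen (ESet α β) := isOpen_iUnion (fun k => isOpen_Ioo)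
  obtain ⟨ε, hε, hball⟩ := Metric.isOpen_iff.1 hEopen _ ha0
  rw [Real.ball_eq_Ioo] at hball
  have ha0lt : pa0 α β x0 < x0 := pa0_lt hαβ hlen x0 hx0
  have hab : pa0 α β x0 < β (chain α β x0 0) := by linarith [x0_lt_b0 hαβ hlen x0 hx0]
  obtain ⟨y, hy1, hy2⟩ := exists_between (lt_min (show pa0 α β x0 < pa0 α β x0 + ε by linarith) hab)
  have hyJ : y ∈ Set.Ioo (α (chain α β x0 0)) (β (chain α β x0 0)) :=
    ⟨hy1, lt_of_lt_of_le hy2 (min_le_right _ _)⟩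
  have hycomp : y ∈ connectedComponentIn (ESet α β) x0 :=
    subset_comp x0 hαβ hlen hx0 (alive_zero' α β x0) hyJ
  have hyball : y ∈ Set.Ioo (pa0 α β x0 - ε) (pa0 α β x0 + ε) :=
    ⟨by linarith, lt_of_lt_of_le hy2 (min_le_left _ _)⟩
  have hsub : Set.Ioo (pa0 α β x0 - ε) (pa0 α β x0 + ε) ⊆
      connectedComponentIn (ESet α β) x0 := by
    rw [connectedComponentIn_eq hycomp]
    exact isPreconnected_Ioo.subset_connectedComponentIn hyball hball
  exact hsub ⟨by linarith, by linarith⟩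

lemma SC_subset_comp (x0 : ℝ) (hx0 : x0 ∈ ESet α β) {k : ℕ} (hk : k ∈ SC α β x0) :
    Set.Ioo (α k) (β k) ⊆ connectedComponentIn (ESet α β) x0 := by
  rcases hk with ⟨i, hA, rfl, -⟩ | ⟨ha0, i, hA, rfl⟩
  · exact subset_comp x0 hαβ hlen hx0 hA
  · intro x hx
    have h1 := lchain_subset_comp hαβ hlen (pa0 α β x0) ha0 hA hx
    have h2 : pa0 α β x0 ∈ connectedComponentIn (ESet α β) x0 :=
      a0_mem_comp hαβ hlen x0 hx0 ha0
    rw [connectedComponentIn_eq h2]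
    exact h1

lemma mult_SC (x0 : ℝ) (hx0 : x0 ∈ ESet α β) (x : ℝ) :
    ∃ p q, ∀ k ∈ SC α β x0, x ∈ Set.Ioo (α k) (β k) → k = p ∨ k = q := by
  classical
  by_cases hIL : pa0 α β x0 ∈ ESet α β ∧ ∃ i, AliveL α β (pa0 α β x0) i ∧
      x ∈ Set.Ioo (α (lchain α β (pa0 α β x0) i)) (β (lchain α β (pa0 α β x0) i))
  · obtain ⟨ha0, iL, hiL, hxiL⟩ := hIL
    have hL0 : ∀ i, AliveL α β (pa0 α β x0) i →
        x ∈ Set.Ioo (α (lchain α β (pa0 α β x0) i)) (β (lchain α β (pa0 α β x0) i)) →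
        pa0 α β x0 < x → i = 0 := by
      intro i hi hx' hgt
      by_contra hne
      have := lchain_le hαβ hlen (pa0 α β x0) ha0 (by omega) hi
      linarith [hx'.2]
    by_cases hIR : ∃ i, Alive α β x0 i ∧ x ∈ Set.Ioo (α (chain α β x0 i)) (β (chain α β x0 i)) ∧
        (prune α β x0 → i ≠ 0)
    · obtain ⟨iR, hiR, hxiR, hprR⟩ := hIR
      have hxgt : pa0 α β x0 < x := by
        rcases Nat.eq_zero_or_pos iR with h0 | h0
        · rw [h0] at hxiR; exact hxiR.1
        · have h1 := x0_le_alpha x0 hlen hx0 h0 hiR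
          have h2 : pa0 α β x0 < x0 := pa0_lt hαβ hlen x0 hx0
          linarith [hxiR.1]
      have hiL0 : iL = 0 := hL0 _ hiL hxiL hxgt
      rw [hiL0] at hxiL
      have hJ2 : β (lchain α β (pa0 α β x0) 0) ≤ β (chain α β x0 0) :=
        junction hαβ hlen x0 hx0 ha0
      have hR01 : ∀ i, Alive α β x0 i →
          x ∈ Set.Ioo (α (chain α β x0 i)) (β (chain α β x0 i)) → i ≤ 1 := by
        intro i hi hx'
        by_contra h2
        have hsep := sep' x0 hlen (show 0 + 2 ≤ i by omega) hi
        linarith [hx'.1, hxiL.2]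
      by_cases hpr : prune α β x0
      · refine ⟨lchain α β (pa0 α β x0) 0, chain α β x0 1, ?_⟩
        rintro k (⟨i, hi, rfl, hprc⟩ | ⟨-, i, hi, rfl⟩) hxk
        · have : i ≤ 1 := hR01 i hi hxk
          have : i = 1 := by have := hprc hpr; omega
          rw [this]; exact Or.inr rfl
        · have : i = 0 := hL0 _ hi hxk hxgt
          rw [this]; exact Or.inl rfl
      · refine ⟨lchain α β (pa0 α β x0) 0, chain α β x0 0, ?_⟩
        rintro k (⟨i, hi, rfl, hprc⟩ | ⟨-, i, hi, rfl⟩) hxk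
        · have hle1 : i ≤ 1 := hR01 i hi hxk
          have : i = 0 := by
            rcases Nat.eq_zero_or_pos i with h0 | h0
            · exact h0
            · exfalso
              have hi1 : i = 1 := by omega
              rw [hi1] at hxk hi
              have hb0E : β (chain α β x0 0) ∈ ESet α β := hi 0 (by omega)
              have hnl : ¬ α (chain α β x0 1) < β (lchain α β (pa0 α β x0) 0) := by
                intro hcon
                exact hpr ⟨ha0, hb0E, hcon⟩
              push_neg at hnl
              linarith [hxk.1, hxiL.2]
          rw [this]; exact Or.inr rfl
        · have : i = 0 := hL0 _ hi hxk hxgt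
          rw [this]; exact Or.inl rfl
    · -- only left-chain intervals can contain x
      have hP : ∃ i, AliveL α β (pa0 α β x0) i ∧
          x ∈ Set.Ioo (α (lchain α β (pa0 α β x0) i)) (β (lchain α β (pa0 α β x0) i)) :=
        ⟨iL, hiL, hxiL⟩
      set i0 := Nat.find hP with hi0
      refine ⟨lchain α β (pa0 α β x0) i0, lchain α β (pa0 α β x0) (i0 + 1), ?_⟩
      rintro k (⟨i, hi, rfl, hprc⟩ | ⟨-, i, hi, rfl⟩) hxk
      · exact absurd ⟨i, hi, hxk, hprc⟩ hIR
      · have h1 : i0 ≤ i := Nat.find_min' hP ⟨hi, hxk⟩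
        have h2 : i ≤ i0 + 1 := by
          by_contra hc
          exact lwindow hαβ hlen (pa0 α β x0) hi (Nat.find_spec hP).2 hxk (by omega)
        rcases Nat.eq_or_lt_of_le h1 with he | hl
        · rw [← he]; exact Or.inl rfl
        · have : i = i0 + 1 := by omega
          rw [this]; exact Or.inr rfl
  · by_cases hIR : ∃ i, Alive α β x0 i ∧
        x ∈ Set.Ioo (α (chain α β x0 i)) (β (chain α β x0 i))
    · set i0 := Nat.find hIR with hi0
      refine ⟨chain α β x0 i0, chain α β x0 (i0 + 1), ?_⟩
      rintro k (⟨i, hi, rfl, hprc⟩ | ⟨ha0, i, hi, rfl⟩) hxk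
      · have h1 : i0 ≤ i := Nat.find_min' hIR ⟨hi, hxk⟩
        have h2 : i ≤ i0 + 1 := by
          by_contra hc
          exact window x0 hlen hi (Nat.find_spec hIR).2 hxk (by omega)
        rcases Nat.eq_or_lt_of_le h1 with he | hl
        · rw [← he]; exact Or.inl rfl
        · have : i = i0 + 1 := by omega
          rw [this]; exact Or.inr rfl
      · exact absurd ⟨ha0, i, hi, hxk⟩ hIL
    · refine ⟨0, 0, ?_⟩
      rintro k (⟨i, hi, rfl, hprc⟩ | ⟨ha0, i, hi, rfl⟩) hxk
      · exact absurd ⟨i, hi, hxk⟩ hIR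
      · exact absurd ⟨ha0, i, hi, hxk⟩ hIL

lemma mid_mem (n : ℕ) : mid' α β n ∈ Set.Ioo (α n) (β n) := by
  have := hαβ n
  constructor <;> simp only [mid'] <;> linarith

lemma mid_E (n : ℕ) : mid' α β n ∈ ESet α β := Ioo_subset_ESet n (mid_mem hαβ hlen n)

lemma rep_spec (n : ℕ) :
    mid' α β (rep' α β n) ∈ connectedComponentIn (ESet α β) (mid' α β n) := by
  have hne : {m | mid' α β m ∈ connectedComponentIn (ESet α β) (mid' α β n)}.Nonempty :=
    ⟨n, mem_connectedComponentIn (mid_E hαβ hlen n)⟩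
  exact Nat.sInf_mem hne

lemma rep_comp_eq (n : ℕ) :
    connectedComponentIn (ESet α β) (mid' α β n) =
      connectedComponentIn (ESet α β) (mid' α β (rep' α β n)) :=
  connectedComponentIn_eq (rep_spec hαβ hlen n)

lemma rep_idem (n : ℕ) : rep' α β (rep' α β n) = rep' α β n := by
  have h : {m | mid' α β m ∈ connectedComponentIn (ESet α β) (mid' α β (rep' α β n))} =
      {m | mid' α β m ∈ connectedComponentIn (ESet α β) (mid' α β n)} := by
    rw [← rep_comp_eq hαβ hlen n]
  show sInf {m | mid' α β m ∈ connectedComponentIn (ESet α β) (mid' α β (rep' α β n))} =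
    rep' α β n
  rw [h]
  rfl

end Assemble

end IntervalCover


/-- Lemma 5 of the paper, covering lemma. -/
theorem interval_covering_multiplicity_two (α β : ℕ → ℝ) (hαβ : ∀ k, α k < β k)
    (hlen : Filter.Tendsto (fun k => β k - α k) Filter.atTop (𝓝 0)) :
    ∃ S : Set ℕ, (⋃ k ∈ S, Set.Ioo (α k) (β k)) = (⋃ k, Set.Ioo (α k) (β k)) ∧
      ∀ x ∈ ⋃ k, Set.Ioo (α k) (β k),
        Set.ncard {k : ℕ | k ∈ S ∧ x ∈ Set.Ioo (α k) (β k)} ≤ 2 := by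
  classical
  open IntervalCover in
  refine ⟨{k | ∃ n, IntervalCover.rep' α β n = n ∧
      k ∈ IntervalCover.SC α β (IntervalCover.mid' α β n)}, ?_, ?_⟩
  · apply subset_antisymm
    · exact iUnion₂_subset fun k _ => IntervalCover.Ioo_subset_ESet k
    · intro x hx
      obtain ⟨n0, hn0⟩ := mem_iUnion.1 hx
      have hrep : IntervalCover.rep' α β (IntervalCover.rep' α β n0) =
          IntervalCover.rep' α β n0 := IntervalCover.rep_idem hαβ hlen n0
      have hmidE : IntervalCover.mid' α β (IntervalCover.rep' α β n0) ∈
          IntervalCover.ESet α β := IntervalCover.mid_E hαβ hlen _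
      have hxE : x ∈ IntervalCover.ESet α β := mem_iUnion.2 ⟨n0, hn0⟩
      have hJsub : Set.Ioo (α n0) (β n0) ⊆
          connectedComponentIn (IntervalCover.ESet α β) x :=
        isPreconnected_Ioo.subset_connectedComponentIn hn0 (IntervalCover.Ioo_subset_ESet n0)
      have hmid0 : IntervalCover.mid' α β n0 ∈
          connectedComponentIn (IntervalCover.ESet α β) x :=
        hJsub (IntervalCover.mid_mem hαβ hlen n0)
      have hxcomp : x ∈ connectedComponentIn (IntervalCover.ESet α β)
          (IntervalCover.mid' α β (IntervalCover.rep' α β n0)) := by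
        have h1 := mem_connectedComponentIn hxE
        rw [connectedComponentIn_eq hmid0, IntervalCover.rep_comp_eq hαβ hlen n0] at h1
        exact h1
      obtain ⟨k, hk, hxk⟩ := IntervalCover.cover_SC hαβ hlen _ hmidE x hxcomp
      exact mem_iUnion₂.2 ⟨k, ⟨IntervalCover.rep' α β n0, hrep, hk⟩, hxk⟩
  · intro x hx
    simp only [Set.mem_setOf_eq]
    by_cases hne : ∃ k, (∃ n, IntervalCover.rep' α β n = n ∧
        k ∈ IntervalCover.SC α β (IntervalCover.mid' α β n)) ∧ x ∈ Set.Ioo (α k) (β k)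
    · obtain ⟨k0, ⟨n1, hrep1, hk1⟩, hxk0⟩ := hne
      have hmidE1 : IntervalCover.mid' α β n1 ∈ IntervalCover.ESet α β :=
        IntervalCover.mid_E hαβ hlen n1
      have hcomp1 : x ∈ connectedComponentIn (IntervalCover.ESet α β)
          (IntervalCover.mid' α β n1) :=
        IntervalCover.SC_subset_comp hαβ hlen _ hmidE1 hk1 hxk0
      obtain ⟨p, q, hpq⟩ := IntervalCover.mult_SC hαβ hlen (IntervalCover.mid' α β n1) hmidE1 x
      have hsub : {k : ℕ | (∃ n, IntervalCover.rep' α β n = n ∧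
          k ∈ IntervalCover.SC α β (IntervalCover.mid' α β n)) ∧
          x ∈ Set.Ioo (α k) (β k)} ⊆ {p, q} := by
        rintro k ⟨⟨n2, hrep2, hk2⟩, hxk⟩
        have hmidE2 : IntervalCover.mid' α β n2 ∈ IntervalCover.ESet α β :=
          IntervalCover.mid_E hαβ hlen n2
        have hcomp2 : x ∈ connectedComponentIn (IntervalCover.ESet α β)
            (IntervalCover.mid' α β n2) :=
          IntervalCover.SC_subset_comp hαβ hlen _ hmidE2 hk2 hxk
        have hn12 : n2 = n1 := by
          have e1 := connectedComponentIn_eq hcomp1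
          have e2 := connectedComponentIn_eq hcomp2
          have hset : {m | IntervalCover.mid' α β m ∈ connectedComponentIn
              (IntervalCover.ESet α β) (IntervalCover.mid' α β n2)} =
              {m | IntervalCover.mid' α β m ∈ connectedComponentIn
              (IntervalCover.ESet α β) (IntervalCover.mid' α β n1)} := by
            rw [e2, e1]
          have : IntervalCover.rep' α β n2 = IntervalCover.rep' α β n1 := by
            unfold IntervalCover.rep'
            rw [hset]
          rw [hrep1, hrep2] at this
          exact this
        subst hn12
        have := hpq k hk2 hxk
        simpa using this
      calc Set.ncard {k : ℕ | (∃ n, IntervalCover.rep' α β n = n ∧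
              k ∈ IntervalCover.SC α β (IntervalCover.mid' α β n)) ∧
              x ∈ Set.Ioo (α k) (β k)}
          ≤ Set.ncard ({p, q} : Set ℕ) :=
            Set.ncard_le_ncard hsub ((Set.finite_singleton q).insert p)
        _ ≤ Set.ncard ({q} : Set ℕ) + 1 := Set.ncard_insert_le p {q}
        _ ≤ 2 := by rw [Set.ncard_singleton]
    · have hempty : {k : ℕ | (∃ n, IntervalCover.rep' α β n = n ∧
          k ∈ IntervalCover.SC α β (IntervalCover.mid' α β n)) ∧
          x ∈ Set.Ioo (α k) (β k)} = ∅ := by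
        ext k
        simp only [Set.mem_setOf_eq, Set.mem_empty_iff_false, iff_false]
        intro hk
        exact hne ⟨k, hk⟩
      rw [hempty, Set.ncard_empty]
      omega
end
end

section
/- Let n : [0,1] → ℝ be an increasing function with n(0) = 0 satisfying |n(x) − n(y)| ≤ |x − y| for all x, y ∈ [0,1], and let a ∈ (0,1] be such that liminf_{r→0+} n(r)/r < a. Then for every δ ∈ (0,1), ∫_0^δ (n(r) − underline{n}^a_δ(r))/r² dr = ∞. -/
open Filter MeasureTheory Set Topology

noncomputable section

lemma lowerReg_le_aux (n : ℝ → ℝ) {a δ : ℝ} (ha0 : 0 < a) (ha1 : a ≤ 1) (hδ0 : 0 < δ)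
    (hnn : ∀ x ∈ Set.Icc (0:ℝ) δ, 0 ≤ n x) {r t : ℝ}
    (hr : 0 ≤ r) (hrt : r ≤ t) (htδ : t ≤ δ) :
    lowerReg n a δ r ≤ n t - a * (t - r) := by
  have htI : t ∈ Set.Icc (0:ℝ) δ := ⟨hr.trans hrt, htδ⟩
  have hrI : r ∈ Set.Icc (0:ℝ) δ := ⟨hr, hrt.trans htδ⟩
  unfold lowerReg lowerRegOn
  apply csSup_le
  · refine ⟨a * r - a * δ, fun x => a * x - a * δ, ?_, ?_, ?_, rfl⟩
    · exact ((contDiff_const.mul contDiff_id).sub contDiff_const).contDiffOn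
    · intro x hx
      show a * x - a * δ ≤ n x
      have h1 := hnn x hx
      nlinarith [mul_nonneg ha0.le (sub_nonneg.2 hx.2)]
    · intro x hx
      have hd : HasDerivWithinAt (fun x => a * x - a * δ) a (Set.Icc 0 δ) x := by
        simpa using ((((hasDerivAt_id x).const_mul a).sub_const (a * δ)).hasDerivWithinAt
          (s := Set.Icc 0 δ))
      rw [hd.derivWithin (uniqueDiffOn_Icc hδ0 x hx)]
      exact ⟨le_rfl, ha1⟩
  · rintro y ⟨φ, hC1, hle, hder, rfl⟩
    have hm : MonotoneOn (fun x => φ x - a * x) (Set.Icc 0 δ) := by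
      apply monotoneOn_of_deriv_nonneg (convex_Icc 0 δ)
      · exact hC1.continuousOn.sub (continuous_const.mul continuous_id).continuousOn
      · rw [interior_Icc]
        intro x hx
        have hmem : Set.Icc (0:ℝ) δ ∈ 𝓝 x := Icc_mem_nhds hx.1 hx.2
        have hdx : DifferentiableAt ℝ φ x :=
          ((hC1.differentiableOn one_ne_zero) x (Set.Ioo_subset_Icc_self hx)).differentiableAt hmem
        exact (hdx.sub ((differentiable_id.const_mul a) x)).differentiableWithinAt
      · rw [interior_Icc]
        intro x hx
        have hmem : Set.Icc (0:ℝ) δ ∈ 𝓝 x := Icc_mem_nhds hx.1 hx.2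
        have hdx : DifferentiableAt ℝ φ x :=
          ((hC1.differentiableOn one_ne_zero) x (Set.Ioo_subset_Icc_self hx)).differentiableAt hmem
        have heq : deriv (fun x => φ x - a * x) x = deriv φ x - a := by
          have h2 : HasDerivAt (fun x => a * x) a x := by
            simpa using (hasDerivAt_id x).const_mul a
          exact ((hdx.hasDerivAt).sub h2).deriv
        rw [heq]
        have hh := (hder x (Set.Ioo_subset_Icc_self hx)).1
        rw [derivWithin_of_mem_nhds hmem] at hh
        linarith
    have h1 := hm hrI htI hrt
    have h2 := hle t htI
    simp only at h1
    linarith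

/-- D₃ is bounded by the lower density quotient. -/
theorem lowerReg_integral_of_liminf_lt (n : ℝ → ℝ)
    (hmono : MonotoneOn n (Set.Icc (0 : ℝ) 1)) (h0 : n 0 = 0)
    (hlip : ∀ x ∈ Set.Icc (0 : ℝ) 1, ∀ y ∈ Set.Icc (0 : ℝ) 1, |n x - n y| ≤ |x - y|)
    (a : ℝ) (ha : a ∈ Set.Ioc (0 : ℝ) 1)
    (hliminf : Filter.liminf (fun r => n r / r) (𝓝[>] (0 : ℝ)) < a)
    (δ : ℝ) (hδ : δ ∈ Set.Ioo (0 : ℝ) 1) :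
    ∫⁻ r in Set.Ioc (0 : ℝ) δ,
      ENNReal.ofReal ((n r - lowerReg n a δ r) / r ^ 2) = ⊤ := by
  obtain ⟨ha0, ha1⟩ := ha
  obtain ⟨hδ0, hδ1⟩ := hδ
  have hnn : ∀ x ∈ Set.Icc (0:ℝ) δ, 0 ≤ n x := by
    intro x hx
    have h := hmono (Set.left_mem_Icc.2 zero_le_one) ⟨hx.1, hx.2.trans hδ1.le⟩ hx.1
    rwa [h0] at h
  set L := Filter.liminf (fun r => n r / r) (𝓝[>] (0:ℝ)) with hL
  set A := max ((L + a)/2) (a/2) with hA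
  have hA0 : 0 < A := lt_of_lt_of_le (by linarith) (le_max_right _ _)
  have hAa : A < a := max_lt (by linarith) (by linarith)
  have hcb : Filter.IsCoboundedUnder (· ≥ ·) (𝓝[>](0:ℝ)) (fun r => n r / r) := by
    apply Filter.isCoboundedUnder_ge_of_eventually_le (𝓝[>](0:ℝ)) (x := 1)
    filter_upwards [Ioo_mem_nhdsGT_of_mem (Set.left_mem_Ico.2 one_pos)] with r hr
    have h1 := hlip r ⟨hr.1.le, hr.2.le⟩ 0 ⟨le_rfl, zero_le_one⟩
    rw [h0, sub_zero, sub_zero] at h1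
    have h2 : n r ≤ r := le_trans (le_abs_self _) (by rwa [abs_of_nonneg hr.1.le] at h1)
    rw [div_le_one hr.1]
    exact h2
  have hfreq : ∃ᶠ r in 𝓝[>](0:ℝ), n r / r < A :=
    Filter.frequently_lt_of_liminf_lt hcb
      (lt_of_lt_of_le (by linarith : L < (L+a)/2) (le_max_left _ _))
  have key : ∀ s : ℝ, 0 < s → ∃ u, 0 < u ∧ u < s ∧ n u < A * u := by
    intro s hs
    have hmem : Set.Ioo (0:ℝ) s ∈ 𝓝[>](0:ℝ) := Ioo_mem_nhdsGT_of_mem ⟨le_rfl, hs⟩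
    obtain ⟨u, hu1, hu2⟩ :=
      (hfreq.and_eventually (Filter.eventually_of_mem hmem (fun x hx => hx))).exists
    exact ⟨u, hu2.1, hu2.2, (div_lt_iff₀ hu2.1).1 hu1⟩
  choose f hf1 hf2 hf3 using key
  let T : ℕ → {x : ℝ // 0 < x ∧ x ≤ δ ∧ n x < A * x} := fun k => Nat.rec
    ⟨f δ hδ0, hf1 δ hδ0, (hf2 δ hδ0).le, hf3 δ hδ0⟩
    (fun _ p => ⟨f (p.1/2) (half_pos p.2.1), hf1 _ _,
      le_trans (hf2 _ _).le (by linarith [p.2.1, p.2.2.1]), hf3 _ _⟩) k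
  set t : ℕ → ℝ := fun k => (T k).1 with htdef
  have ht0 : ∀ k, 0 < t k := fun k => (T k).2.1
  have htδ : ∀ k, t k ≤ δ := fun k => (T k).2.2.1
  have htA : ∀ k, n (t k) < A * t k := fun k => (T k).2.2.2
  have hstep : ∀ k, t (k+1) < t k / 2 := fun k => hf2 _ _
  have hanti : StrictAnti t :=
    strictAnti_nat_of_succ_lt (fun k => (hstep k).trans_le (by linarith [ht0 k]))
  have hlt : ∀ {j k : ℕ}, j < k → t k ≤ t j / 2 := by
    intro j k hjk
    calc t k ≤ t (j+1) := hanti.antitone hjk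
      _ ≤ t j / 2 := (hstep j).le
  set ε := (a - A) / (2 * a) with hε
  have hε0 : 0 < ε := div_pos (by linarith) (by linarith)
  have hε1 : ε < 1 := by rw [div_lt_one (by linarith)]; linarith
  set c := (a - A) / 2 with hc
  have hc0 : 0 < c := by rw [hc]; linarith
  have hεc : a * ε = c := by
    rw [hε, hc]; field_simp
  have hpt : ∀ k, ∀ r ∈ Set.Ioc (ε * t k / 2) (ε * t k), c * t k ≤ n r - lowerReg n a δ r := by
    intro k r hr
    have htk := ht0 k
    have hr0 : 0 < r := lt_of_le_of_lt (by positivity) hr.1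
    have hεt : ε * t k ≤ t k := by nlinarith
    have hrt : r ≤ t k := hr.2.trans hεt
    have hlow := lowerReg_le_aux n ha0 ha1 hδ0 hnn hr0.le hrt (htδ k)
    have hnr : 0 ≤ n r := hnn r ⟨hr0.le, hrt.trans (htδ k)⟩
    have h1 := htA k
    have har : a * r ≤ c * t k := by
      calc a * r ≤ a * (ε * t k) := by nlinarith [hr.2]
        _ = c * t k := by rw [← mul_assoc, hεc]
    have h2 : a * t k - A * t k = 2 * (c * t k) := by rw [hc]; ring
    linarith
  have hIsub : ∀ k, Set.Ioc (ε * t k / 2) (ε * t k) ⊆ Set.Ioc (0:ℝ) δ := by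
    intro k r hr
    have htk := ht0 k
    refine ⟨lt_of_le_of_lt (by positivity) hr.1, hr.2.trans (le_trans ?_ (htδ k))⟩
    nlinarith
  have hdisj : Pairwise (Function.onFun Disjoint
      (fun k => Set.Ioc (ε * t k / 2) (ε * t k))) := by
    have main : ∀ j k : ℕ, j < k →
        Disjoint (Set.Ioc (ε * t j / 2) (ε * t j)) (Set.Ioc (ε * t k / 2) (ε * t k)) := by
      intro j k h
      apply Set.disjoint_left.2
      intro x hxj hxk
      have h1 : t k ≤ t j / 2 := hlt h
      have h2 : x ≤ ε * t k := hxk.2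
      have h3 : ε * t k ≤ ε * (t j / 2) := by nlinarith
      have h4 : ε * t j / 2 < x := hxj.1
      nlinarith
    intro j k hjk
    rcases Ne.lt_or_gt hjk with h | h
    · exact main j k h
    · exact (main k j h).symm
  have hint : ∀ k : ℕ, ENNReal.ofReal (c / (2 * ε)) ≤
      ∫⁻ r in Set.Ioc (ε * t k / 2) (ε * t k),
        ENNReal.ofReal ((n r - lowerReg n a δ r) / r ^ 2) := by
    intro k
    have htk := ht0 k
    have hvol : volume (Set.Ioc (ε * t k / 2) (ε * t k))
        = ENNReal.ofReal (ε * t k / 2) := by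
      rw [Real.volume_Ioc]; congr 1; ring
    have hCb : ENNReal.ofReal (c / (2 * ε)) =
        ENNReal.ofReal (c * t k / (ε * t k)^2) * volume (Set.Ioc (ε * t k / 2) (ε * t k)) := by
      rw [hvol, ← ENNReal.ofReal_mul (by positivity)]
      congr 1
      field_simp
    rw [hCb, ← setLIntegral_const]
    apply setLIntegral_mono' measurableSet_Ioc
    intro r hr
    apply ENNReal.ofReal_le_ofReal
    have hr0 : 0 < r := lt_of_le_of_lt (by positivity) hr.1
    have h1 := hpt k r hr
    have h2 : r^2 ≤ (ε * t k)^2 := by nlinarith [hr.2]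
    calc c * t k / (ε * t k)^2 ≤ c * t k / r^2 :=
          div_le_div_of_nonneg_left (by positivity) (by positivity) h2
      _ ≤ (n r - lowerReg n a δ r) / r^2 :=
          by gcongr
  rw [← top_le_iff]
  calc (⊤ : ENNReal) = ∑' (_ : ℕ), ENNReal.ofReal (c / (2 * ε)) :=
        (ENNReal.tsum_const_eq_top_of_ne_zero
          (ENNReal.ofReal_pos.2 (by positivity)).ne').symm
    _ ≤ ∑' k : ℕ, ∫⁻ r in Set.Ioc (ε * t k / 2) (ε * t k),
          ENNReal.ofReal ((n r - lowerReg n a δ r) / r ^ 2) := ENNReal.tsum_le_tsum hint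
    _ = ∫⁻ r in ⋃ k : ℕ, Set.Ioc (ε * t k / 2) (ε * t k),
          ENNReal.ofReal ((n r - lowerReg n a δ r) / r ^ 2) :=
        (lintegral_iUnion (fun _ => measurableSet_Ioc) hdisj _).symm
    _ ≤ ∫⁻ r in Set.Ioc (0:ℝ) δ,
          ENNReal.ofReal ((n r - lowerReg n a δ r) / r ^ 2) :=
        lintegral_mono_set (Set.iUnion_subset hIsub)
end
end
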